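/- arXiv:1704.06152 — 4 statements merged into one kernel-verified Lean document; each statement's English description precedes it below -/
import Mathlib

section
/- Let A be a pseudocompact k-algebra and V a pseudocompact A-module. Then the submodule of V abstractly generated by any finite subset of V is closed in V. -/
/-! Throughout, `k` is a perfect field regarded as a discrete topological ring.

A *pseudocompact* `k`-algebra is an associative unital Hausdorff topological `k`-algebra
which has a basis of neighbourhoods of `0` consisting of open two-sided ideals of finite
codimension intersecting in `0`, and which is the inverse limit of its quotients by these
ideals; equivalently (as encoded below) it is a complete Hausdorff topological algebra with
such a basis of open ideals. -/

/-- The Jacobson radical of a topological algebra: the intersection of the open maximal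
left ideals. -/
def openJacobson (A : Type) [Ring A] [TopologicalSpace A] : Ideal A :=
  sInf {I : Ideal A | IsOpen (I : Set A) ∧ I.IsMaximal}

/-- The Jacobson radical `J(A)`, viewed as a `k`-submodule of `A`. -/
def Jrad (k : Type) [Field k] (A : Type) [Ring A] [Algebra k A] [TopologicalSpace A] :
    Submodule k A := (openJacobson A).restrictScalars k

/-- Powers of the radical: `J⁰(A) = A`, `J¹(A) = J(A)`, `Jⁿ(A) = J(A)·Jⁿ⁻¹(A)` for `n > 1`
(the product of two `k`-submodules being spanned by the products of their elements). -/
def Jpow (k : Type) [Field k] (A : Type) [Ring A] [Algebra k A] [TopologicalSpace A] :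
    ℕ → Submodule k A
  | 0 => ⊤
  | 1 => Jrad k A
  | n + 2 => Jrad k A * Jpow k A (n + 1)

/-- `A` is a pseudocompact `k`-algebra: Hausdorff, complete, with a basis of neighbourhoods
of `0` consisting of open two-sided ideals of finite codimension over `k`.  (Hausdorffness is
equivalent to the requirement that these open ideals intersect in `0`, and completeness to
`A` being the inverse limit of its quotients by them.) -/
structure IsPseudocompactAlgebra (k : Type) [Field k] (A : Type) [Ring A] [Algebra k A]
    [UniformSpace A] [IsUniformAddGroup A] [IsTopologicalRing A] : Prop where
  t2 : T2Space A
  complete : CompleteSpace A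
  basis : ∀ s ∈ nhds (0 : A), ∃ I : Ideal A,
    (∀ x ∈ I, ∀ b : A, x * b ∈ I) ∧ IsOpen (I : Set A) ∧
    FiniteDimensional k (A ⧸ I.restrictScalars k) ∧ (I : Set A) ⊆ s

/-- `V` is a pseudocompact `A`-module: Hausdorff, complete, with a basis of neighbourhoods
of `0` consisting of open submodules of finite codimension over `k`. -/
structure IsPseudocompactModule (k : Type) [Field k] (A : Type) [Ring A] [Algebra k A]
    (V : Type) [AddCommGroup V] [Module k V] [Module A V] [IsScalarTower k A V]
    [UniformSpace V] [IsUniformAddGroup V] : Prop where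
  t2 : T2Space V
  complete : CompleteSpace V
  basis : ∀ s ∈ nhds (0 : V), ∃ p : Submodule A V,
    IsOpen (p : Set V) ∧ FiniteDimensional k (V ⧸ p.restrictScalars k) ∧ (p : Set V) ⊆ s

/-- A pseudocompact algebra `A` is *pointed* if `A/J(A)` is isomorphic to a finite product of
copies of `k`; equivalently, there is a surjective `k`-algebra homomorphism `A → kⁿ`
whose kernel is `J(A)`. -/
def IsPointed (k : Type) [Field k] (A : Type) [Ring A] [Algebra k A] [TopologicalSpace A] :
    Prop :=
  ∃ (n : ℕ) (φ : A →ₐ[k] (Fin n → k)), Function.Surjective φ ∧ RingHom.ker φ = openJacobson A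

open Filter Set Topology

set_option linter.unusedSectionVars false

section Helpers

variable {A : Type} [Ring A] {M : Type} [AddCommGroup M] [Module A M] [TopologicalSpace M]

/-- a coset of a closed submodule -/
def IsCCoset (A : Type) [Ring A] {M : Type} [AddCommGroup M] [Module A M] [TopologicalSpace M]
    (s : Set M) : Prop :=
  ∃ N : Submodule A M, IsClosed (N : Set M) ∧ ∃ c : M, s = {x | x - c ∈ N}

theorem coset_eq_of_mem (N : Submodule A M) {c c' : M} (h : c' ∈ {x | x - c ∈ N}) :
    {x | x - c ∈ N} = {x | x - c' ∈ N} := by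
  ext x
  have hc : c' - c ∈ N := h
  constructor
  · intro hx
    have : (x - c) - (c' - c) ∈ N := sub_mem hx hc
    simpa using this
  · intro hx
    have : (x - c') + (c' - c) ∈ N := add_mem hx hc
    simpa using this

theorem IsCCoset.inter {s t : Set M} (hs : IsCCoset A s) (ht : IsCCoset A t)
    (hne : (s ∩ t).Nonempty) : IsCCoset A (s ∩ t) := by
  obtain ⟨N1, hN1, c1, rfl⟩ := hs
  obtain ⟨N2, hN2, c2, rfl⟩ := ht
  obtain ⟨c, hc1, hc2⟩ := hne
  refine ⟨N1 ⊓ N2, hN1.inter hN2, c, ?_⟩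
  rw [coset_eq_of_mem N1 hc1, coset_eq_of_mem N2 hc2]
  ext x
  simp [Submodule.mem_inf]

end Helpers

/-- The range of a continuous linear map from a pseudocompact module to a Hausdorff
linearly topologized module is closed (a linear-compactness argument). -/
theorem closedRange_of_pc
    (k : Type) [Field k] (A : Type) [Ring A] [Algebra k A]
    (M : Type) [AddCommGroup M] [Module k M] [Module A M] [IsScalarTower k A M]
    [UniformSpace M] [IsUniformAddGroup M]
    (V : Type) [AddCommGroup V] [Module k V] [Module A V] [IsScalarTower k A V]
    [UniformSpace V] [IsUniformAddGroup V]
    (hMc : CompleteSpace M)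
    (hM : ∀ s ∈ nhds (0 : M), ∃ U : Submodule A M, IsOpen (U : Set M) ∧
      FiniteDimensional k (M ⧸ U.restrictScalars k) ∧ (U : Set M) ⊆ s)
    (hVt2 : T2Space V)
    (hV : ∀ s ∈ nhds (0 : V), ∃ p : Submodule A V, IsOpen (p : Set V) ∧ (p : Set V) ⊆ s)
    (f : M →ₗ[A] V) (hf : Continuous f) :
    IsClosed (Set.range f) := by
  classical
  haveI := hMc
  haveI := hVt2
  refine isClosed_of_closure_subset ?_
  intro v hv
  -- the family of open submodules of `V`
  set opens : Set (Submodule A V) := {p | IsOpen (p : Set V)} with hopens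
  have htopo : (⊤ : Submodule A V) ∈ opens := by
    simp [hopens, Submodule.top_coe, isOpen_univ]
  haveI : Nonempty opens := ⟨⟨⊤, htopo⟩⟩
  -- for an open submodule p, F p is the preimage of the coset v + p
  set F : opens → Set M := fun p => {x | f x - v ∈ (p : Submodule A V)} with hF
  -- each F p is nonempty
  have hFne : ∀ p : opens, (F p).Nonempty := by
    rintro ⟨p, hp⟩
    have hpv : {w : V | w - v ∈ p} ∈ nhds v := by
      have h0 : (p : Set V) ∈ nhds (0 : V) := hp.mem_nhds p.zero_mem
      have hc : Continuous fun w : V => w - v := continuous_id.sub continuous_const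
      have := hc.continuousAt (x := v)
      rw [ContinuousAt] at this
      have : (fun w : V => w - v) ⁻¹' (p : Set V) ∈ nhds v := this (by simpa using h0)
      exact this
    rcases mem_closure_iff_nhds.1 hv _ hpv with ⟨w, hw1, x, rfl⟩
    exact ⟨x, hw1⟩
  -- each F p is closed
  have hFclosed : ∀ p : opens, IsClosed (F p) := by
    rintro ⟨p, hp⟩
    have hpc : IsClosed (p : Set V) :=
      AddSubgroup.isClosed_of_isOpen p.toAddSubgroup hp
    have : IsClosed ((fun w : V => w - v) ⁻¹' (p : Set V)) :=
      hpc.preimage (continuous_id.sub continuous_const)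
    exact this.preimage hf
  -- each F p is a coset of a closed submodule
  have hFcoset : ∀ p : opens, IsCCoset A (F p) := by
    rintro p
    obtain ⟨x0, hx0⟩ := hFne p
    refine ⟨(p : Submodule A V).comap f, ?_, x0, ?_⟩
    · have hpc : IsClosed ((p : Submodule A V) : Set V) :=
        AddSubgroup.isClosed_of_isOpen (p : Submodule A V).toAddSubgroup p.2
      exact hpc.preimage hf
    · ext x
      simp only [hF, mem_setOf_eq, Submodule.mem_comap, map_sub]
      constructor
      · intro hx
        have : (f x - v) - (f x0 - v) ∈ (p : Submodule A V) := sub_mem hx hx0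
        simpa using this
      · intro hx
        have : (f x - f x0) + (f x0 - v) ∈ (p : Submodule A V) := add_mem hx hx0
        simpa using this
  -- the filter generated by the F p
  have hdir : Directed (· ≥ ·) fun p : opens => (𝓟 (F p) : Filter M) := by
    rintro ⟨p, hp⟩ ⟨q, hq⟩
    refine ⟨⟨p ⊓ q, ?_⟩, ?_, ?_⟩
    · simpa [hopens] using hp.inter hq
    · exact principal_mono.2 fun x hx => (Submodule.mem_inf.1 hx).1
    · exact principal_mono.2 fun x hx => (Submodule.mem_inf.1 hx).2
  set ℱ0 : Filter M := ⨅ p : opens, 𝓟 (F p) with hℱ0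
  have hmem0 : ∀ s : Set M, s ∈ ℱ0 ↔ ∃ p : opens, F p ⊆ s := by
    intro s
    rw [hℱ0, mem_iInf_of_directed hdir]
    simp [mem_principal]
  have hF0mem : ∀ p : opens, F p ∈ ℱ0 := fun p => (hmem0 _).2 ⟨p, subset_rfl⟩
  -- the class of "coset filters" refining ℱ0
  set P : Filter M → Prop := fun ℱ =>
    ℱ.NeBot ∧ ∀ s ∈ ℱ, ∃ t ∈ ℱ, t ⊆ s ∧ IsCCoset A t with hP
  set Z : Set (Filter M) := {ℱ | P ℱ ∧ ℱ ≤ ℱ0} with hZ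
  have hℱ0Z : ℱ0 ∈ Z := by
    refine ⟨⟨?_, ?_⟩, le_rfl⟩
    · exact iInf_neBot_of_directed' hdir fun p => principal_neBot_iff.2 (hFne p)
    · intro s hs
      obtain ⟨p, hp⟩ := (hmem0 s).1 hs
      exact ⟨F p, hF0mem p, hp, hFcoset p⟩
  -- Zorn's lemma: get a minimal element of Z
  obtain ⟨ℱ, hℱZ, hℱmin⟩ : ∃ ℱ ∈ Z, ∀ z ∈ Z, z ≤ ℱ → ℱ ≤ z := by
    have hchain : ∀ c : Set (Filter M)ᵒᵈ, c ⊆ Z → IsChain (· ≤ ·) c →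
        ∃ ub ∈ Z, ∀ z ∈ c, z ≤ ub := by
      intro c hcZ hc
      rcases c.eq_empty_or_nonempty with rfl | hcne
      · exact ⟨ℱ0, hℱ0Z, by simp⟩
      · haveI : Nonempty c := hcne.to_subtype
        set toF : c → Filter M := fun g => OrderDual.ofDual (g : (Filter M)ᵒᵈ) with htoF
        have hdirc : Directed (· ≥ ·) toF := by
          rintro ⟨x, hx⟩ ⟨y, hy⟩
          rcases eq_or_ne x y with rfl | hne
          · exact ⟨⟨x, hx⟩, le_rfl, le_rfl⟩
          · rcases hc hx hy hne with h | h
            · exact ⟨⟨y, hy⟩, (h : OrderDual.ofDual y ≤ OrderDual.ofDual x), le_rfl⟩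
            · exact ⟨⟨x, hx⟩, le_rfl, (h : OrderDual.ofDual x ≤ OrderDual.ofDual y)⟩
        set lb : Filter M := ⨅ g : c, toF g with hlb
        have hmemlb : ∀ s : Set M, s ∈ lb ↔ ∃ g : c, s ∈ toF g :=
          fun s => mem_iInf_of_directed hdirc s
        refine ⟨lb, ⟨⟨?_, ?_⟩, ?_⟩, ?_⟩
        · exact iInf_neBot_of_directed' hdirc fun g => (hcZ g.2).1.1
        · intro s hs
          obtain ⟨g, hg⟩ := (hmemlb s).1 hs
          obtain ⟨t, ht, hts, htc⟩ := (hcZ g.2).1.2 s hg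
          exact ⟨t, (hmemlb t).2 ⟨g, ht⟩, hts, htc⟩
        · obtain ⟨g, hg⟩ := hcne
          have h1 : lb ≤ toF ⟨g, hg⟩ := iInf_le toF ⟨g, hg⟩
          have h2 : toF ⟨g, hg⟩ ≤ ℱ0 := (hcZ hg).2
          exact h1.trans h2
        · intro z hz
          exact iInf_le toF ⟨z, hz⟩
    obtain ⟨ℱ, hm⟩ := zorn_le₀ (α := (Filter M)ᵒᵈ) Z hchain
    exact ⟨ℱ, hm.1, fun z hz hle => hm.2 hz hle⟩
  obtain ⟨⟨hℱNB, hℱcos⟩, hℱle⟩ := hℱZ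
  haveI := hℱNB
  -- ℱ is Cauchy
  have hcauchy : Cauchy ℱ := by
    refine ⟨hℱNB, ?_⟩
    rw [uniformity_eq_comap_nhds_zero M, ← map_le_iff_le_comap]
    intro s hs
    obtain ⟨U, hUo, hUfd, hUs⟩ := hM s hs
    haveI : FiniteDimensional k (M ⧸ U.restrictScalars k) := hUfd
    set π := (U.restrictScalars k).mkQ with hπ
    -- minimize the rank of the image of the defining submodule of a coset in ℱ
    set R : Set ℕ := {n | ∃ t ∈ ℱ, ∃ N : Submodule A M, IsClosed (N : Set M) ∧
      (∃ c, t = {x | x - c ∈ N} ∧ c ∈ t) ∧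
      Module.finrank k (Submodule.map π (N.restrictScalars k)) = n} with hR
    have hRne : R.Nonempty := by
      obtain ⟨t, ht, -, N, hNc, c, rfl⟩ := hℱcos univ univ_mem
      exact ⟨_, _, ht, N, hNc, ⟨c, rfl, by simp⟩, rfl⟩
    obtain ⟨n0, hn0R, hn0min⟩ := Nat.lt_wfRel.wf.has_min R hRne
    obtain ⟨t0, ht0, N0, hN0c, ⟨c0, ht0eq, hc0t0⟩, hrank0⟩ := hn0R
    -- every set of ℱ contains a point mapping to π c0
    have key : ∀ s' ∈ ℱ, ∃ y ∈ s', π y = π c0 := by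
      intro s' hs'
      obtain ⟨t, ht, hts, N, hNc, c, rfl⟩ := hℱcos s' hs'
      have htt0 : t0 ∩ {x | x - c ∈ N} ∈ ℱ := inter_mem ht0 ht
      obtain ⟨c', hc'⟩ := Filter.nonempty_of_mem htt0
      have hc'0 : c' ∈ t0 := hc'.1
      have hc't : c' - c ∈ N := hc'.2
      have hc'N0 : c' - c0 ∈ N0 := by rw [ht0eq] at hc'0; exact hc'0
      have hinter : t0 ∩ {x | x - c ∈ N} = {x | x - c' ∈ N0 ⊓ N} := by
        rw [ht0eq, coset_eq_of_mem N0 hc'N0, coset_eq_of_mem N hc't]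
        ext x; simp [Submodule.mem_inf]
      -- the rank of the image of N0 ⊓ N is also in R, hence ≥ n0
      have hmemR : Module.finrank k
          (Submodule.map π ((N0 ⊓ N).restrictScalars k)) ∈ R := by
        refine ⟨_, htt0, N0 ⊓ N, hN0c.inter hNc, ⟨c', ?_, ?_⟩, rfl⟩
        · exact hinter
        · rw [hinter]; simp
      have hle : Submodule.map π ((N0 ⊓ N).restrictScalars k) ≤
          Submodule.map π (N0.restrictScalars k) := by
        refine Submodule.map_mono ?_
        intro x hx
        exact (Submodule.mem_inf.1 hx).1
      have heq : Submodule.map π ((N0 ⊓ N).restrictScalars k) =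
          Submodule.map π (N0.restrictScalars k) := by
        refine Submodule.eq_of_le_of_finrank_le hle ?_
        rw [hrank0]
        by_contra hlt
        exact hn0min _ hmemR (Nat.lt_of_not_le hlt)
      -- transfer π c0 into the small coset
      have hc0im : π (c0 - c') ∈ Submodule.map π ((N0 ⊓ N).restrictScalars k) := by
        rw [heq]
        exact Submodule.mem_map_of_mem (by simpa using neg_mem hc'N0)
      obtain ⟨d, hd, hdπ⟩ := hc0im
      refine ⟨c' + d, hts ?_, ?_⟩
      · show c' + d - c ∈ N
        have hdN : d ∈ N := ((Submodule.mem_inf).1 hd).2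
        have : (c' - c) + d ∈ N := add_mem hc't hdN
        simpa [add_sub_right_comm] using this
      · have : π (c' + d) = π c' + π (c0 - c') := by rw [map_add, hdπ]
        rw [this, map_sub]; abel
    -- the coset of U around c0 belongs to ℱ by minimality
    set W : Set M := {x | x - c0 ∈ U} with hW
    have hWcoset : IsCCoset A W := by
      refine ⟨U, AddSubgroup.isClosed_of_isOpen U.toAddSubgroup hUo, c0, rfl⟩
    have hπW : ∀ x, x ∈ W ↔ π x = π c0 := by
      intro x
      rw [hπ, Submodule.mkQ_apply, Submodule.mkQ_apply, Submodule.Quotient.eq]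
      exact Iff.rfl
    have hℱ'NB : (ℱ ⊓ 𝓟 W).NeBot := by
      rw [inf_principal_neBot_iff]
      intro u hu
      obtain ⟨y, hy, hyπ⟩ := key u hu
      exact ⟨y, hy, (hπW y).2 hyπ⟩
    have hℱ'Z : ℱ ⊓ 𝓟 W ∈ Z := by
      refine ⟨⟨hℱ'NB, ?_⟩, inf_le_left.trans hℱle⟩
      intro s'' hs''
      rw [mem_inf_iff] at hs''
      obtain ⟨t₁, ht₁, t₂, ht₂, rfl⟩ := hs''
      obtain ⟨t, ht, hts, htc⟩ := hℱcos t₁ ht₁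
      have htW : t ∩ W ∈ ℱ ⊓ 𝓟 W :=
        inter_mem_inf ht (mem_principal_self W)
      refine ⟨t ∩ W, htW, ?_, ?_⟩
      · exact inter_subset_inter hts (mem_principal.1 ht₂)
      · exact htc.inter hWcoset (hℱ'NB.nonempty_of_mem htW)
    have hWℱ : W ∈ ℱ := by
      have := hℱmin _ hℱ'Z inf_le_left
      exact this (mem_inf_of_right (mem_principal_self W))
    -- conclude smallness
    rw [mem_map]
    refine mem_of_superset (prod_mem_prod hWℱ hWℱ) ?_
    rintro ⟨x, y⟩ ⟨hx, hy⟩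
    refine hUs ?_
    show y - x ∈ (U : Set M)
    have : (y - c0) - (x - c0) ∈ U := sub_mem hy hx
    simpa using this
  -- ℱ converges; the limit maps to v
  obtain ⟨x, hx⟩ := CompleteSpace.complete hcauchy
  have hxF : ∀ p : opens, x ∈ F p := by
    intro p
    have hFmem : F p ∈ ℱ := hℱle (hF0mem p)
    have : ClusterPt x (𝓟 (F p)) := by
      refine NeBot.mono hℱNB (le_inf hx (le_principal_iff.2 hFmem))
    exact (hFclosed p).closure_subset ((mem_closure_iff_clusterPt).2 this)
  have hfv : f x = v := by
    by_contra hne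
    have h0 : f x - v ≠ 0 := sub_ne_zero.2 hne
    have hop : ({f x - v}ᶜ : Set V) ∈ nhds (0 : V) :=
      (isOpen_compl_singleton).mem_nhds (by simpa using (Ne.symm h0))
    obtain ⟨p, hpo, hps⟩ := hV _ hop
    have := hxF ⟨p, hpo⟩
    exact hps this rfl
  exact ⟨x, hfv⟩


/-- Let `A` be a pseudocompact `k`-algebra and `V` a pseudocompact
`A`-module.  Then the submodule of `V` abstractly generated by any finite subset of `V`
is closed in `V`. -/
theorem span_finset_isClosed
    (k : Type) [Field k] [PerfectField k]
    (A : Type) [Ring A] [Algebra k A] [UniformSpace A] [IsUniformAddGroup A] [IsTopologicalRing A]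
    (hA : IsPseudocompactAlgebra k A)
    (V : Type) [AddCommGroup V] [Module k V] [Module A V] [IsScalarTower k A V]
    [UniformSpace V] [IsUniformAddGroup V] [ContinuousSMul A V]
    (hV : IsPseudocompactModule k A V)
    (S : Finset V) :
    IsClosed ((Submodule.span A (S : Set V) : Submodule A V) : Set V) := by
  classical
  haveI : T2Space A := hA.t2
  haveI : CompleteSpace A := hA.complete
  set ι := {x : V // x ∈ S} with hι
  set vv : ι → V := fun i => (i : V) with hvv
  set f : (ι → A) →ₗ[A] V :=
    { toFun := fun a => ∑ i, a i • vv i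
      map_add' := fun a b => by simp [add_smul, Finset.sum_add_distrib]
      map_smul' := fun r a => by simp [mul_smul, Finset.smul_sum] } with hfdef
  have hfc : Continuous f := by
    show Continuous fun a : ι → A => ∑ i, a i • vv i
    exact continuous_finset_sum _ fun i _ => ((continuous_apply i).smul continuous_const)
  have h2 : LinearMap.range f = Submodule.span A (S : Set V) := by
    apply le_antisymm
    · rintro _ ⟨a, rfl⟩
      show ∑ i, a i • vv i ∈ _
      exact Submodule.sum_mem _ fun i _ =>
        Submodule.smul_mem _ _ (Submodule.subset_span (by simp [hvv]))
    · rw [Submodule.span_le]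
      intro x hx
      refine ⟨Pi.single (⟨x, hx⟩ : ι) 1, ?_⟩
      show ∑ j, Pi.single (⟨x, hx⟩ : ι) 1 j • vv j = x
      rw [Finset.sum_eq_single (⟨x, hx⟩ : ι)]
      · simp [hvv]
      · intro b _ hb
        simp [Pi.single_eq_of_ne hb]
      · intro h
        exact absurd (Finset.mem_univ _) h
  have hMbasis : ∀ s ∈ nhds (0 : ι → A), ∃ U : Submodule A (ι → A),
      IsOpen (U : Set (ι → A)) ∧
      FiniteDimensional k ((ι → A) ⧸ U.restrictScalars k) ∧ (U : Set (ι → A)) ⊆ s := by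
    intro s hs
    rw [nhds_pi, Filter.mem_pi] at hs
    obtain ⟨I, hIfin, t, ht, hts⟩ := hs
    have hT : (⋂ i, t i) ∈ nhds (0 : A) := Filter.iInter_mem.2 ht
    obtain ⟨J, -, hJo, hJfd, hJt⟩ := hA.basis _ hT
    refine ⟨Submodule.pi Set.univ (fun _ => J), ?_, ?_, ?_⟩
    · have hcoe : ((Submodule.pi Set.univ (fun _ : ι => J) : Submodule A (ι → A)) : Set (ι → A))
          = Set.pi Set.univ (fun _ => (J : Set A)) := by
        ext x; simp [Submodule.mem_pi, Set.mem_pi]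
      rw [hcoe]
      exact isOpen_set_pi finite_univ (fun i _ => hJo)
    · have hres : (Submodule.pi Set.univ (fun _ : ι => J)).restrictScalars k
          = Submodule.pi Set.univ (fun _ => J.restrictScalars k) := by
        ext x; simp [Submodule.mem_pi]
      rw [hres]
      haveI := hJfd
      exact (Submodule.quotientPi (fun _ : ι => J.restrictScalars k)).symm.finiteDimensional
    · intro x hx
      refine hts ?_
      intro i _
      have hxi : x i ∈ J := by
        have := hx
        rw [SetLike.mem_coe, Submodule.mem_pi] at this
        exact this i trivial
      exact Set.mem_iInter.1 (hJt hxi) i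
  have hclosed : IsClosed (Set.range f) := by
    refine closedRange_of_pc k A (ι → A) V ?_ hMbasis hV.t2 ?_ f hfc
    · infer_instance
    · intro s hs
      obtain ⟨p, hpo, -, hps⟩ := hV.basis s hs
      exact ⟨p, hpo, hps⟩
  rw [← h2, LinearMap.coe_range]
  exact hclosed
end

section
/- Let A be a pseudocompact k-algebra such that A/J²(A) is finite dimensional over k. Then the Jacobson radical J(A) is finitely generated as an A-module. -/
section Helpers
variable {A : Type} [Ring A] [TopologicalSpace A] [IsTopologicalRing A]

lemma isOpen_of_le_submodule {G : AddSubgroup A} {H : AddSubgroup A} (h : G ≤ H)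
    (hG : IsOpen (G : Set A)) : IsOpen (H : Set A) :=
  AddSubgroup.isOpen_mono h hG

/-- The transporter ideal `{c | c * w ∈ U}` is a coatom given the generation hypothesis. -/
lemma coatom_transporter (U : Ideal A) (w : A) (hw : w ∉ U)
    (hgen : ∀ z : A, z * w ∉ U → ∃ u ∈ U, ∃ b : A, u + b * (z * w) = w) :
    IsCoatom (Submodule.comap (LinearMap.toSpanSingleton A A w) U) := by
  constructor
  · intro htop
    apply hw
    have : (1 : A) ∈ Submodule.comap (LinearMap.toSpanSingleton A A w) U := htop ▸ trivial
    simpa using this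
  · intro c hc
    obtain ⟨z, hzc, hz⟩ := SetLike.exists_of_lt hc
    have hzw : z * w ∉ U := by
      intro h; exact hz (by simpa [LinearMap.toSpanSingleton_apply, smul_eq_mul] using h)
    obtain ⟨u, hu, b, hub⟩ := hgen z hzw
    have h1 : (1 : A) - b * z ∈ Submodule.comap (LinearMap.toSpanSingleton A A w) U := by
      simp only [Submodule.mem_comap, LinearMap.toSpanSingleton_apply, smul_eq_mul]
      have hb : b * (z * w) = w - u := eq_sub_of_add_eq' hub
      have : (1 - b * z) * w = u := by
        rw [sub_mul, one_mul, mul_assoc, hb, sub_sub_cancel]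
      rw [this]; exact hu
    have h1c : (1 : A) - b * z ∈ c := hc.le h1
    have hbz : b * z ∈ c := c.smul_mem b hzc
    have : (1 : A) ∈ c := by
      have := c.add_mem h1c hbz; simpa using this
    exact Submodule.eq_top_iff'.mpr fun a => by simpa using c.smul_mem a this

lemma openJacobson_mul_mem {x : A} (hx : x ∈ openJacobson A) (a : A) :
    x * a ∈ openJacobson A := by
  rw [openJacobson, Submodule.mem_sInf]
  intro m hm
  obtain ⟨hopen, hmax⟩ := hm
  by_cases htop : ∀ c : A, c * a ∈ m
  · exact htop x
  · push_neg at htop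
    obtain ⟨c₀, hc₀⟩ := htop
    have ha : a ∉ m := fun h => hc₀ (m.smul_mem c₀ h)
    have hmw : IsCoatom (Submodule.comap (LinearMap.toSpanSingleton A A a) m) := by
      apply coatom_transporter m a ha
      intro z hz
      have hlt : m < m ⊔ Submodule.span A {z * a} := by
        rw [left_lt_sup]
        intro hle
        exact hz (hle (Submodule.mem_span_singleton_self _))
      have htop' : m ⊔ Submodule.span A {z * a} = ⊤ := (Ideal.isMaximal_def.mp hmax).2 _ hlt
      have : a ∈ m ⊔ Submodule.span A {z * a} := htop' ▸ trivial
      obtain ⟨u, hu, v, hv, huv⟩ := Submodule.mem_sup.mp this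
      obtain ⟨b, hb⟩ := Submodule.mem_span_singleton.mp hv
      exact ⟨u, hu, b, by rw [← smul_eq_mul, hb]; exact huv⟩
    have hopen' : IsOpen ((Submodule.comap (LinearMap.toSpanSingleton A A a) m : Ideal A) : Set A) := by
      have : ((Submodule.comap (LinearMap.toSpanSingleton A A a) m : Ideal A) : Set A)
          = (fun c => c * a) ⁻¹' (m : Set A) := by
        ext c; simp [Submodule.mem_comap, LinearMap.toSpanSingleton_apply, smul_eq_mul]
      rw [this]
      exact hopen.preimage (continuous_mul_right a)
    have hJle : openJacobson A ≤ Submodule.comap (LinearMap.toSpanSingleton A A a) m :=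
      sInf_le ⟨hopen', Ideal.isMaximal_def.mpr hmw⟩
    have := hJle hx
    simpa [Submodule.mem_comap, LinearMap.toSpanSingleton_apply, smul_eq_mul] using this

end Helpers

section JpowLemmas
variable (k : Type) [Field k] (A : Type) [Ring A] [Algebra k A] [TopologicalSpace A]
  [IsTopologicalRing A]

lemma jpow_two : Jpow k A 2 = Jrad k A * Jpow k A 1 := rfl

lemma jpow_succ_succ (m : ℕ) : Jpow k A (m + 2) = Jrad k A * Jpow k A (m + 1) := rfl

variable {k A}

lemma mem_jrad {x : A} : x ∈ Jrad k A ↔ x ∈ openJacobson A := Iff.rfl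

lemma jpow_succ_smul (m : ℕ) (a : A) {y : A} (hy : y ∈ Jpow k A (m + 1)) :
    a * y ∈ Jpow k A (m + 1) := by
  cases m with
  | zero =>
    exact mem_jrad.mpr ((openJacobson A).smul_mem a (mem_jrad.mp hy))
  | succ m =>
    rw [jpow_succ_succ] at hy ⊢
    refine Submodule.mul_induction_on hy (fun z hz w hw => ?_) (fun p q hp hq => ?_)
    · rw [← mul_assoc]
      exact Submodule.mul_mem_mul (mem_jrad.mpr ((openJacobson A).smul_mem a (mem_jrad.mp hz))) hw
    · rw [mul_add]; exact Submodule.add_mem _ hp hq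

lemma jrad_mul_mem_jpow {m : ℕ} {z y : A} (hz : z ∈ Jrad k A) (hy : y ∈ Jpow k A m) :
    z * y ∈ Jpow k A (m + 1) := by
  cases m with
  | zero => exact mem_jrad.mpr (openJacobson_mul_mem (mem_jrad.mp hz) y)
  | succ m => rw [jpow_succ_succ]; exact Submodule.mul_mem_mul hz hy

lemma jpow_succ_le (m : ℕ) : Jpow k A (m + 2) ≤ Jpow k A (m + 1) := by
  rw [jpow_succ_succ]
  exact Submodule.mul_le.mpr fun z hz y hy => jpow_succ_smul m z hy

lemma jpow_le_jpow : ∀ {m₀ m : ℕ}, m₀ ≤ m → Jpow k A (m + 1) ≤ Jpow k A (m₀ + 1) := by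
  intro m₀ m h
  induction m with
  | zero => rw [Nat.le_zero.mp h]
  | succ m ih =>
    rcases Nat.lt_or_ge m₀ (m + 1) with h' | h'
    · exact (jpow_succ_le m).trans (ih (Nat.lt_succ_iff.mp h'))
    · rw [Nat.le_antisymm h h']

end JpowLemmas

section Part1
variable {k : Type} [Field k] {A : Type} [Ring A] [Algebra k A] [TopologicalSpace A]
  [IsTopologicalRing A]

lemma exists_jpow_le (I : Ideal A) (hIr : ∀ x ∈ I, ∀ b : A, x * b ∈ I)
    (hIo : IsOpen (I : Set A)) (hIf : FiniteDimensional k (A ⧸ I.restrictScalars k)) :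
    ∃ m : ℕ, Jpow k A (m + 1) ≤ I.restrictScalars k := by
  classical
  set Ik := I.restrictScalars k with hIk
  set π := Ik.mkQ with hπ
  haveI : FiniteDimensional k (A ⧸ Ik) := hIf
  -- the chain of images stabilizes
  set f : ℕ → ℕ := fun m => Module.finrank k (Submodule.map π (Jpow k A (m + 1))) with hf
  have hne : (Set.range f).Nonempty := ⟨f 0, 0, rfl⟩
  obtain ⟨m, hm⟩ := Nat.sInf_mem hne
  have hstab : Submodule.map π (Jpow k A (m + 2)) = Submodule.map π (Jpow k A (m + 1)) := by
    apply Submodule.eq_of_le_of_finrank_le (Submodule.map_mono (jpow_succ_le m))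
    show f m ≤ f (m + 1)
    rw [hm]
    exact Nat.sInf_le ⟨m + 1, rfl⟩
  have hWeq : Ik ⊔ Jpow k A (m + 2) = Ik ⊔ Jpow k A (m + 1) := by
    have := congrArg (Submodule.comap π) hstab
    rw [Submodule.comap_map_eq, Submodule.comap_map_eq, Submodule.ker_mkQ] at this
    rw [sup_comm Ik, sup_comm Ik]
    exact this
  refine ⟨m, ?_⟩
  by_contra hcon
  set W : Submodule k A := Ik ⊔ Jpow k A (m + 1) with hWdef
  have hIkW : Ik ≤ W := le_sup_left
  have hIkneW : Ik ≠ W := by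
    intro h
    exact hcon (le_sup_right.trans h.symm.le)
  have hWst : ∀ a : A, ∀ w ∈ W, a * w ∈ W := by
    intro a w hw
    obtain ⟨u, hu, v, hv, rfl⟩ := Submodule.mem_sup.mp hw
    rw [mul_add]
    exact Submodule.add_mem _
      (Submodule.mem_sup_left (by exact I.smul_mem a hu))
      (Submodule.mem_sup_right (jpow_succ_smul m a hv))
  -- choose a maximal proper stable submodule between Ik and W
  set S : Set (Submodule k A) :=
    {U | (∀ a : A, ∀ u ∈ U, a * u ∈ U) ∧ Ik ≤ U ∧ U < W} with hS
  have hIkS : Ik ∈ S := by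
    refine ⟨fun a u hu => I.smul_mem a hu, le_rfl, lt_of_le_of_ne hIkW hIkneW⟩
  set T : Set ℕ := (fun U => Module.finrank k (Submodule.map π U)) '' S with hT
  have hTne : T.Nonempty := ⟨_, Ik, hIkS, rfl⟩
  have hTbdd : BddAbove T := by
    refine ⟨Module.finrank k (A ⧸ Ik), ?_⟩
    rintro n ⟨U, hU, rfl⟩
    exact Submodule.finrank_le _
  obtain ⟨U, hUS, hUd⟩ := Nat.sSup_mem hTne hTbdd
  obtain ⟨hUst, hUIk, hUW⟩ := hUS
  -- maximality of U
  have hUmax : ∀ U' : Submodule k A, (∀ a : A, ∀ u ∈ U', a * u ∈ U') →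
      U < U' → U' ≤ W → U' = W := by
    intro U' hst hlt hle
    by_contra hne'
    have hU'S : U' ∈ S := ⟨hst, hUIk.trans hlt.le, lt_of_le_of_ne hle hne'⟩
    have hmaplt : Submodule.map π U < Submodule.map π U' := by
      refine lt_of_le_of_ne (Submodule.map_mono hlt.le) ?_
      intro heq
      have : U' ≤ U := by
        have h1 : U' ≤ Submodule.comap π (Submodule.map π U') := Submodule.le_comap_map _ _
        rw [← heq, Submodule.comap_map_eq, Submodule.ker_mkQ] at h1
        rwa [sup_eq_left.mpr (hUIk : Ik ≤ U)] at h1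
      exact absurd (le_antisymm this hlt.le) (ne_of_gt hlt)
    have hlt2 := Submodule.finrank_lt_finrank_of_lt hmaplt
    have hle' : Module.finrank k (Submodule.map π U') ≤ sSup T :=
      le_csSup hTbdd ⟨U', hU'S, rfl⟩
    have hUd' : Module.finrank k (Submodule.map π U) = sSup T := hUd
    omega
  -- every element of W outside U is sent into U by the radical
  have hkey : ∀ w ∈ W, w ∉ U → ∀ x ∈ openJacobson A, x * w ∈ U := by
    intro w hwW hwU x hx
    set UA : Ideal A :=
      { carrier := (U : Set A)
        add_mem' := fun ha hb => U.add_mem ha hb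
        zero_mem' := U.zero_mem
        smul_mem' := fun c {u} hu => by
          simpa [smul_eq_mul] using hUst c u hu } with hUA
    have hmemUA : ∀ {v : A}, v ∈ UA ↔ v ∈ U := Iff.rfl
    have hco : IsCoatom (Submodule.comap (LinearMap.toSpanSingleton A A w) UA) := by
      apply coatom_transporter UA w (by simpa [hmemUA] using hwU)
      intro z hzw
      have hzwW : z * w ∈ W := hWst z w hwW
      set U' : Submodule k A := U ⊔ LinearMap.range (LinearMap.mulRight k (z * w)) with hU'
      have hU'st : ∀ a : A, ∀ u ∈ U', a * u ∈ U' := by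
        intro a u hu
        obtain ⟨p, hp, q, hq, rfl⟩ := Submodule.mem_sup.mp hu
        obtain ⟨b, rfl⟩ := hq
        rw [mul_add]
        refine Submodule.add_mem _ (Submodule.mem_sup_left (hUst a p hp))
          (Submodule.mem_sup_right ⟨a * b, ?_⟩)
        simp [LinearMap.mulRight_apply, mul_assoc]
      have hltU' : U < U' := by
        refine lt_of_le_of_ne le_sup_left ?_
        intro heq
        apply hzw
        rw [hmemUA]
        have : z * w ∈ U' := Submodule.mem_sup_right ⟨1, by simp [LinearMap.mulRight_apply]⟩
        rwa [← heq] at this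
      have hleU' : U' ≤ W := by
        refine sup_le hUW.le ?_
        rintro v ⟨b, rfl⟩
        simpa [LinearMap.mulRight_apply, mul_assoc] using hWst b _ hzwW
      have hU'W : U' = W := hUmax U' hU'st hltU' hleU'
      have hwU' : w ∈ U' := hU'W ▸ hwW
      obtain ⟨u, hu, q, hq, huq⟩ := Submodule.mem_sup.mp hwU'
      obtain ⟨b, rfl⟩ := hq
      exact ⟨u, hu, b, by simpa [LinearMap.mulRight_apply, mul_assoc] using huq⟩
    have hopen' : IsOpen ((Submodule.comap (LinearMap.toSpanSingleton A A w) UA : Ideal A) : Set A) := by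
      have hle : I.toAddSubgroup ≤ (Submodule.comap (LinearMap.toSpanSingleton A A w) UA).toAddSubgroup := by
        intro i hi
        have : i * w ∈ I := hIr i hi w
        have : i * w ∈ U := hUIk this
        simpa [Submodule.mem_comap, LinearMap.toSpanSingleton_apply, smul_eq_mul, hmemUA] using this
      exact isOpen_of_le_submodule hle hIo
    have hJle : openJacobson A ≤ Submodule.comap (LinearMap.toSpanSingleton A A w) UA :=
      sInf_le ⟨hopen', Ideal.isMaximal_def.mpr hco⟩
    have := hJle hx
    simpa [Submodule.mem_comap, LinearMap.toSpanSingleton_apply, smul_eq_mul, hmemUA] using this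
  -- contradiction: W ≤ U
  have hWU : W ≤ U := by
    rw [← hWeq]
    refine sup_le hUIk ?_
    rw [jpow_succ_succ]
    refine Submodule.mul_le.mpr fun x hx y hy => ?_
    have hyW : y ∈ W := Submodule.mem_sup_right hy
    by_cases hyU : y ∈ U
    · exact hUst x y hyU
    · exact hkey y hyW hyU x (mem_jrad.mp hx)
  exact absurd (le_antisymm hWU hUW.le) (ne_of_lt hUW).symm

end Part1

section Part2
variable {k : Type} [Field k] {A : Type} [Ring A] [Algebra k A]

/-- The `k`-linear map `(aᵢ) ↦ ∑ aᵢ xᵢ`. -/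
noncomputable def sumMul {ι : Type} [Fintype ι] (x : ι → A) : (ι → A) →ₗ[k] A where
  toFun a := ∑ i, a i * x i
  map_add' a b := by simp [add_mul, Finset.sum_add_distrib]
  map_smul' c a := by
    simp only [Pi.smul_apply, RingHom.id_apply]
    rw [Finset.smul_sum]
    exact Finset.sum_congr rfl fun i _ => smul_mul_assoc c (a i) (x i)

@[simp] lemma sumMul_apply {ι : Type} [Fintype ι] (x a : ι → A) :
    sumMul (k := k) x a = ∑ i, a i * x i := rfl

variable [TopologicalSpace A] [IsTopologicalRing A]

lemma jpow_step {ι : Type} [Fintype ι] [DecidableEq ι] (x : ι → A) (hxJ : ∀ i, x i ∈ Jrad k A)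
    (hx : Jrad k A ≤ Submodule.span k (Set.range x) ⊔ Jpow k A 2) (m : ℕ) :
    Jpow k A (m + 1) ≤
      Submodule.map (sumMul (k := k) x) (Submodule.pi Set.univ fun _ : ι => Jpow k A m)
        ⊔ Jpow k A (m + 2) := by
  induction m with
  | zero =>
    refine hx.trans (sup_le_sup_right ?_ _)
    rw [Submodule.span_le]
    rintro - ⟨i, rfl⟩
    refine ⟨Pi.single i 1, Submodule.mem_pi.mpr fun j _ => trivial, ?_⟩
    rw [sumMul_apply]
    rw [Finset.sum_eq_single i (fun j _ hj => by simp [Pi.single_eq_of_ne hj])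
      (fun h => absurd (Finset.mem_univ i) h)]
    simp
  | succ m ih =>
    rw [jpow_succ_succ]
    refine Submodule.mul_le.mpr fun z hz y hy => ?_
    obtain ⟨q, hq, s, hs, rfl⟩ := Submodule.mem_sup.mp (ih hy)
    obtain ⟨a, ha, rfl⟩ := hq
    rw [mul_add]
    refine Submodule.add_mem _ (Submodule.mem_sup_left ?_) (Submodule.mem_sup_right ?_)
    · refine ⟨fun i => z * a i, ?_, ?_⟩
      · exact Submodule.mem_pi.mpr fun i _ =>
          jrad_mul_mem_jpow hz (Submodule.mem_pi.mp ha i trivial)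
      · rw [sumMul_apply]
        show (∑ i, (z * a i) * x i) = z * (sumMul (k := k) x) a
        rw [sumMul_apply, Finset.mul_sum]
        exact Finset.sum_congr rfl fun i _ => (mul_assoc z (a i) (x i))
    · rw [jpow_succ_succ k A (m + 1)]
      exact Submodule.mul_mem_mul hz hs

end Part2


theorem openJacobson_fg'
    (k : Type) [Field k]
    (A : Type) [Ring A] [Algebra k A] [UniformSpace A] [IsUniformAddGroup A] [IsTopologicalRing A]
    (hA : IsPseudocompactAlgebra k A)
    (hfd : FiniteDimensional k (A ⧸ Jpow k A 2)) :
    (openJacobson A).FG := by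
  classical
  haveI := hA.t2
  haveI := hA.complete
  -- choose generators of J modulo J²
  set π₂ := (Jpow k A 2).mkQ with hπ₂
  haveI : IsNoetherian k (A ⧸ Jpow k A 2) := IsNoetherian.iff_fg.mpr hfd
  obtain ⟨s, hs⟩ := IsNoetherian.noetherian (Submodule.map π₂ (Jrad k A))
  set ι := {e : A ⧸ Jpow k A 2 // e ∈ s} with hι
  haveI : Fintype ι := FinsetCoe.fintype s
  haveI : DecidableEq ι := Classical.decEq _
  have hmem : ∀ e : ι, (e : A ⧸ Jpow k A 2) ∈ Submodule.map π₂ (Jrad k A) := fun e => by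
    rw [← hs]; exact Submodule.subset_span e.2
  choose x hxJ hxπ using fun e : ι => Submodule.mem_map.mp (hmem e)
  have hx : Jrad k A ≤ Submodule.span k (Set.range x) ⊔ Jpow k A 2 := by
    intro y hy
    have h1 : π₂ y ∈ Submodule.map π₂ (Submodule.span k (Set.range x)) := by
      rw [Submodule.map_span]
      have himg : π₂ '' Set.range x = (s : Set (A ⧸ Jpow k A 2)) := by
        rw [← Set.range_comp]
        ext e; constructor
        · rintro ⟨i, rfl⟩; rw [Function.comp_apply, hxπ]; exact i.2
        · intro he; exact ⟨⟨e, he⟩, hxπ _⟩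
      rw [himg, hs]
      exact Submodule.mem_map_of_mem hy
    obtain ⟨z, hz, hzy⟩ := Submodule.mem_map.mp h1
    have hdiff : y - z ∈ Jpow k A 2 := by
      have : π₂ (y - z) = 0 := by rw [map_sub, hzy, sub_self]
      rwa [← LinearMap.mem_ker, Submodule.ker_mkQ] at this
    have hyz : y = z + (y - z) := by abel
    rw [hyz]
    exact Submodule.add_mem _ (Submodule.mem_sup_left hz) (Submodule.mem_sup_right hdiff)
  have key : ∀ m : ℕ, ∀ z ∈ Jpow k A (m + 1), ∃ a : ι → A,
      (∀ i, a i ∈ Jpow k A m) ∧ z - sumMul (k := k) x a ∈ Jpow k A (m + 2) := by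
    intro m z hz
    obtain ⟨q, hq, r, hr, hqr⟩ := Submodule.mem_sup.mp (jpow_step x hxJ hx m hz)
    obtain ⟨a, ha, rfl⟩ := hq
    refine ⟨a, fun i => Submodule.mem_pi.mp ha i trivial, ?_⟩
    rw [← hqr]; simpa using hr
  have hmain : openJacobson A ≤ Ideal.span (Set.range x) := by
    intro y hy
    have hy1 : y ∈ Jpow k A 1 := hy
    let G : ∀ m : ℕ, {z : A // z ∈ Jpow k A (m + 1)} := fun m =>
      Nat.rec ⟨y, hy1⟩ (fun m p =>
        ⟨p.1 - sumMul (k := k) x (key m p.1 p.2).choose, ((key m p.1 p.2).choose_spec).2⟩) m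
    let a : ℕ → ι → A := fun m => (key m (G m).1 (G m).2).choose
    have ha : ∀ m i, a m i ∈ Jpow k A m := fun m => ((key m (G m).1 (G m).2).choose_spec).1
    have hGsucc : ∀ m, (G (m + 1)).1 = (G m).1 - sumMul (k := k) x (a m) := fun m => rfl
    let c : ℕ → ι → A := fun m => ∑ j ∈ Finset.range m, a j
    have hc : ∀ m, sumMul (k := k) x (c m) = y - (G m).1 := by
      intro m; induction m with
      | zero => show sumMul (k := k) x (∑ j ∈ Finset.range 0, a j) = y - y; simp
      | succ m ih =>
        have hcs : c (m + 1) = c m + a m := by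
          show (∑ j ∈ Finset.range (m + 1), a j) = c m + a m
          rw [Finset.sum_range_succ]
        rw [hcs, map_add, ih, hGsucc m]
        abel
    have hG0 : Filter.Tendsto (fun m => (G m).1) Filter.atTop (nhds 0) := by
      rw [Filter.tendsto_def]
      intro t ht
      obtain ⟨I, hIr, hIo, hIf, hIt⟩ := hA.basis t ht
      obtain ⟨m₀, hm₀⟩ := exists_jpow_le (k := k) I hIr hIo hIf
      rw [Filter.mem_atTop_sets]
      refine ⟨m₀, fun m hm => ?_⟩
      exact hIt (hm₀ (jpow_le_jpow hm (G m).2))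
    have hcauchy : ∀ i : ι, ∃ b : A, Filter.Tendsto (fun m => c m i) Filter.atTop (nhds b) := by
      intro i
      apply cauchySeq_tendsto_of_complete
      rw [cauchySeq_iff]
      intro V hV
      rw [uniformity_eq_comap_nhds_zero A, Filter.mem_comap] at hV
      obtain ⟨t, ht, htV⟩ := hV
      obtain ⟨I, hIr, hIo, hIf, hIt⟩ := hA.basis t ht
      obtain ⟨m₀, hm₀⟩ := exists_jpow_le (k := k) I hIr hIo hIf
      have hcvi : ∀ v, c v i = ∑ j ∈ Finset.range v, a j i := fun v => by
        show (∑ j ∈ Finset.range v, a j) i = _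
        rw [Finset.sum_apply]
      have hdiff : ∀ {u v : ℕ}, m₀ + 1 ≤ u → u ≤ v → c v i - c u i ∈ I := by
        intro u v hu huv
        rw [hcvi, hcvi, ← Finset.sum_Ico_eq_sub _ huv]
        refine Submodule.sum_mem _ fun j hj => ?_
        have hj1 : m₀ + 1 ≤ j := hu.trans (Finset.mem_Ico.mp hj).1
        obtain ⟨j', rfl⟩ : ∃ j', j = j' + 1 := ⟨j - 1, by omega⟩
        exact hm₀ (jpow_le_jpow (by omega) (ha (j' + 1) i))
      refine ⟨m₀ + 1, fun p hp q hq => ?_⟩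
      apply htV
      show c q i - c p i ∈ t
      apply hIt
      rcases le_total p q with h | h
      · exact hdiff hp h
      · have := I.neg_mem (hdiff hq h)
        rwa [neg_sub] at this
    choose b hb using hcauchy
    have htendc : Filter.Tendsto c Filter.atTop (nhds b) := tendsto_pi_nhds.mpr hb
    have hcont : Continuous fun v : ι → A => ∑ i, v i * x i :=
      continuous_finset_sum _ fun i _ => ((continuous_apply i).mul continuous_const)
    have h1 : Filter.Tendsto (fun m => sumMul (k := k) x (c m)) Filter.atTop
        (nhds (sumMul (k := k) x b)) := (hcont.tendsto b).comp htendc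
    have h2 : Filter.Tendsto (fun m => sumMul (k := k) x (c m)) Filter.atTop (nhds y) := by
      have heq : (fun m => sumMul (k := k) x (c m)) = fun m => y - (G m).1 := funext hc
      rw [heq]
      have := Filter.Tendsto.sub (tendsto_const_nhds (x := y) (f := Filter.atTop)) hG0
      simpa using this
    have hyb : y = sumMul (k := k) x b := tendsto_nhds_unique h2 h1
    rw [hyb]
    show (∑ i, b i * x i) ∈ Ideal.span (Set.range x)
    refine Submodule.sum_mem _ fun i _ => ?_
    rw [← smul_eq_mul]
    exact Submodule.smul_mem _ (b i) (Ideal.subset_span ⟨i, rfl⟩)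
  have hle : Ideal.span (Set.range x) ≤ openJacobson A := by
    rw [Ideal.span_le]
    rintro - ⟨i, rfl⟩
    exact hxJ i
  exact Submodule.fg_def.mpr ⟨Set.range x, Set.finite_range x, le_antisymm hle hmain⟩

/-- Let `A` be a pseudocompact `k`-algebra with `A/J²(A)` finite
dimensional over `k`.  Then `J(A)` is finitely generated as an `A`-module. -/
theorem openJacobson_fg
    (k : Type) [Field k] [PerfectField k]
    (A : Type) [Ring A] [Algebra k A] [UniformSpace A] [IsUniformAddGroup A] [IsTopologicalRing A]
    (hA : IsPseudocompactAlgebra k A)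
    (hfd : FiniteDimensional k (A ⧸ Jpow k A 2)) :
    (openJacobson A).FG := by
  exact openJacobson_fg' k A hA hfd
end

section
/- Let A and B be pseudocompact k-algebras such that A/J²(A) and B/J²(B) are finite dimensional over k, and let α : A → B be a continuous surjective algebra homomorphism. Then α(Jⁿ(A)) = Jⁿ(B) for every natural number n ≥ 0. -/
/-! ### Auxiliary material for the proof -/

open Submodule Filter

namespace PCthm

section Coset

variable {k : Type} [Field k] {M N : Type} [AddCommGroup M] [Module k M]
  [AddCommGroup N] [Module k N]

/-- The coset `x + p` of a submodule. -/
def coset (x : M) (p : Submodule k M) : Set M := {y | y - x ∈ p}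

@[simp] lemma mem_coset {x y : M} {p : Submodule k M} : y ∈ coset x p ↔ y - x ∈ p := Iff.rfl

lemma mem_coset_self (x : M) (p : Submodule k M) : x ∈ coset x p := by
  simp

lemma coset_nonempty (x : M) (p : Submodule k M) : (coset x p).Nonempty :=
  ⟨x, mem_coset_self x p⟩

lemma image_coset (f : M →ₗ[k] N) (x : M) (p : Submodule k M) :
    ⇑f '' coset x p = coset (f x) (p.map f) := by
  ext z
  constructor
  · rintro ⟨y, hy, rfl⟩
    exact ⟨y - x, hy, by simp⟩
  · rintro ⟨w, hw, hwz⟩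
    refine ⟨x + w, ?_, by rw [map_add, hwz]; abel⟩
    show x + w - x ∈ p
    simpa using hw

lemma dir_le_of_coset_subset {x y : M} {p q : Submodule k M}
    (h : coset x p ⊆ coset y q) : p ≤ q := by
  intro m hm
  have h1 : x + m - y ∈ q := h (show x + m - x ∈ p by simpa using hm)
  have h2 : x - y ∈ q := h (mem_coset_self x p)
  have h3 := sub_mem h1 h2
  have h4 : x + m - y - (x - y) = m := by abel
  rwa [h4] at h3

lemma coset_eq_of_subset_of_dir_eq {x y : M} {p q : Submodule k M}
    (h : coset x p ⊆ coset y q) (hpq : p = q) : coset x p = coset y q := by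
  subst hpq
  have hx : x - y ∈ p := h (mem_coset_self x p)
  ext z
  constructor
  · exact fun hz => h hz
  · intro hz
    have hz' : z - y ∈ p := hz
    have h5 : z - y - (x - y) = z - x := by abel
    have := sub_mem hz' hx
    rw [h5] at this
    exact this

lemma inter_coset_eq {x y z : M} {p q : Submodule k M}
    (hz : z ∈ coset x p ∩ coset y q) :
    coset x p ∩ coset y q = coset z (p ⊓ q) := by
  obtain ⟨hzp, hzq⟩ := hz
  have hzp' : z - x ∈ p := hzp
  have hzq' : z - y ∈ q := hzq
  ext w
  constructor
  · rintro ⟨hwp, hwq⟩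
    have hwp' : w - x ∈ p := hwp
    have hwq' : w - y ∈ q := hwq
    have e1 : w - x - (z - x) = w - z := by abel
    have e2 : w - y - (z - y) = w - z := by abel
    exact ⟨by rw [← e1]; exact sub_mem hwp' hzp', by rw [← e2]; exact sub_mem hwq' hzq'⟩
  · rintro ⟨h1, h2⟩
    have hwz : w - z ∈ p := h1
    have hwz' : w - z ∈ q := h2
    constructor
    · show w - x ∈ p
      have e : w - z + (z - x) = w - x := by abel
      rw [← e]; exact add_mem hwz hzp'
    · show w - y ∈ q
      have e : w - z + (z - y) = w - y := by abel
      rw [← e]; exact add_mem hwz' hzq'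

lemma coset_sub_mem {g : M} {p : Submodule k M} {a b : M}
    (ha : a ∈ coset g p) (hb : b ∈ coset g p) : a - b ∈ p := by
  have ha' : a - g ∈ p := ha
  have hb' : b - g ∈ p := hb
  have e : a - g - (b - g) = a - b := by abel
  rw [← e]; exact sub_mem ha' hb'

end Coset

section LinearCompact

variable {k : Type} [Field k] {A : Type} [Ring A] [Algebra k A]
  [UniformSpace A] [IsUniformAddGroup A] [IsTopologicalRing A]

/-- Pseudocompact algebras are linearly compact: a downward-directed family of nonempty
closed cosets of `k`-submodules has nonempty intersection. -/
theorem pc_linearlyCompact (hA : IsPseudocompactAlgebra k A)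
    {T : Set (Set A)} (hne : T.Nonempty)
    (hcoset : ∀ S ∈ T, ∃ (x : A) (p : Submodule k A), S = coset x p)
    (hclosed : ∀ S ∈ T, IsClosed S)
    (hdir : ∀ S₁ ∈ T, ∀ S₂ ∈ T, ∃ S₃ ∈ T, S₃ ⊆ S₁ ∩ S₂) :
    (⋂₀ T).Nonempty := by
  classical
  -- The collection of "admissible" families extending T
  set Adm : Set (Set (Set A)) :=
    {F | T ⊆ F ∧ (∀ S ∈ F, ∃ (x : A) (p : Submodule k A), S = coset x p) ∧
      (∀ S₁ ∈ F, ∀ S₂ ∈ F, ∃ S₃ ∈ F, S₃ ⊆ S₁ ∩ S₂)} with hAdm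
  have hTAdm : T ∈ Adm := ⟨subset_rfl, hcoset, hdir⟩
  have hchainCond : ∀ c ⊆ Adm, IsChain (· ⊆ ·) c → c.Nonempty →
      ∃ ub ∈ Adm, ∀ s ∈ c, s ⊆ ub := by
    intro c hcAdm hchain hcne
    refine ⟨⋃₀ c, ⟨?_, ?_, ?_⟩, fun s hs => Set.subset_sUnion_of_mem hs⟩
    · obtain ⟨F, hF⟩ := hcne
      exact Set.Subset.trans (hcAdm hF).1 (Set.subset_sUnion_of_mem hF)
    · rintro S ⟨F, hF, hSF⟩
      exact (hcAdm hF).2.1 S hSF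
    · rintro S₁ ⟨F₁, hF₁, hS₁⟩ S₂ ⟨F₂, hF₂, hS₂⟩
      rcases hchain.total hF₁ hF₂ with h | h
      · obtain ⟨S₃, hS₃, hsub⟩ := (hcAdm hF₂).2.2 S₁ (h hS₁) S₂ hS₂
        exact ⟨S₃, Set.mem_sUnion_of_mem hS₃ hF₂, hsub⟩
      · obtain ⟨S₃, hS₃, hsub⟩ := (hcAdm hF₁).2.2 S₁ hS₁ S₂ (h hS₂)
        exact ⟨S₃, Set.mem_sUnion_of_mem hS₃ hF₁, hsub⟩
  obtain ⟨M, hTM, hMmax⟩ := zorn_subset_nonempty Adm hchainCond T hTAdm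
  have hMAdm : M ∈ Adm := hMmax.prop
  obtain ⟨hTM', hMcoset, hMdir⟩ := hMAdm
  obtain ⟨S₀, hS₀T⟩ := hne
  have hS₀M : S₀ ∈ M := hTM' hS₀T
  have hMne : ∀ S ∈ M, S.Nonempty := by
    intro S hS
    obtain ⟨x, p, rfl⟩ := hMcoset S hS
    exact coset_nonempty x p
  -- Key smallness property of a maximal admissible family
  have key : ∀ s ∈ nhds (0 : A), ∃ S ∈ M, ∀ a ∈ S, ∀ b ∈ S, a - b ∈ s := by
    intro s hs
    obtain ⟨I, hI2, hIopen, hIfd, hIsub⟩ := hA.basis s hs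
    set p : Submodule k A := I.restrictScalars k with hp
    haveI : FiniteDimensional k (A ⧸ p) := hIfd
    set π : A →ₗ[k] A ⧸ p := p.mkQ with hπ
    -- images of members of M in the finite dimensional quotient are cosets
    have himg : ∀ S ∈ M, ∃ (x : A ⧸ p) (q : Submodule k (A ⧸ p)), ⇑π '' S = coset x q := by
      intro S hS
      obtain ⟨x, r, rfl⟩ := hMcoset S hS
      exact ⟨π x, r.map π, image_coset π x r⟩
    set ranks : Set ℕ :=
      {n | ∃ S ∈ M, ∃ (x : A ⧸ p) (q : Submodule k (A ⧸ p)),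
        ⇑π '' S = coset x q ∧ Module.finrank k q = n} with hranks
    have hranksne : ranks.Nonempty := by
      obtain ⟨x, q, hq⟩ := himg S₀ hS₀M
      exact ⟨Module.finrank k q, S₀, hS₀M, x, q, hq, rfl⟩
    obtain ⟨Smin, hSmin, xmin, qmin, hqmin, hqrank⟩ := Nat.sInf_mem hranksne
    -- minimality: the image of `Smin` is contained in the image of every member of M
    have hminimal : ∀ S ∈ M, coset xmin qmin ⊆ ⇑π '' S := by
      intro S hS
      obtain ⟨S', hS', hsub⟩ := hMdir Smin hSmin S hS
      obtain ⟨x', q', hq'⟩ := himg S' hS'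
      have hsub1 : coset x' q' ⊆ coset xmin qmin := by
        rw [← hq', ← hqmin]; exact Set.image_mono (hsub.trans Set.inter_subset_left)
      have hle : q' ≤ qmin := dir_le_of_coset_subset hsub1
      have hrank' : Module.finrank k qmin ≤ Module.finrank k q' := by
        rw [hqrank]
        exact Nat.sInf_le ⟨S', hS', x', q', hq', rfl⟩
      have heq : q' = qmin := Submodule.eq_of_le_of_finrank_le hle hrank'
      have : coset x' q' = coset xmin qmin := coset_eq_of_subset_of_dir_eq hsub1 heq
      rw [← this, ← hq']
      exact Set.image_mono (hsub.trans Set.inter_subset_right)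
    -- pick a preimage of the base point of the minimal image coset
    have hxminmem : xmin ∈ ⇑π '' Smin := hminimal Smin hSmin (mem_coset_self xmin qmin)
    obtain ⟨g, hgS, hgπ⟩ := hxminmem
    -- every member of M meets the coset g + p
    have hmeets : ∀ S ∈ M, (S ∩ coset g p).Nonempty := by
      intro S hS
      obtain ⟨t, htS, htπ⟩ := hminimal S hS (mem_coset_self xmin qmin)
      refine ⟨t, htS, ?_⟩
      show t - g ∈ p
      have h0 : π (t - g) = 0 := by rw [map_sub, htπ, hgπ, sub_self]
      exact (Submodule.Quotient.mk_eq_zero p).mp (by rwa [Submodule.mkQ_apply] at h0)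
    -- extend M by the intersections with the coset g + p; by maximality they lie in M
    set M' : Set (Set A) := M ∪ {S' | ∃ S ∈ M, S' = S ∩ coset g p} with hM'
    have hM'Adm : M' ∈ Adm := by
      refine ⟨fun s hs => Or.inl (hTM' hs), ?_, ?_⟩
      · rintro S (hS | ⟨S₁, hS₁, rfl⟩)
        · exact hMcoset S hS
        · obtain ⟨x₁, p₁, rfl⟩ := hMcoset S₁ hS₁
          obtain ⟨z, hz⟩ := hmeets _ hS₁
          exact ⟨z, p₁ ⊓ p, inter_coset_eq hz⟩
      · have base : ∀ S₁ ∈ M, ∀ S₂ ∈ M, ∃ S₃ ∈ M', S₃ ⊆ (S₁ ∩ coset g p) ∩ (S₂ ∩ coset g p) := by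
          intro S₁ h₁ S₂ h₂
          obtain ⟨S₃, h₃, hsub⟩ := hMdir S₁ h₁ S₂ h₂
          refine ⟨S₃ ∩ coset g p, Or.inr ⟨S₃, h₃, rfl⟩, ?_⟩
          intro a ⟨ha₃, hag⟩
          exact ⟨⟨(hsub ha₃).1, hag⟩, (hsub ha₃).2, hag⟩
        rintro S₁ (h₁ | ⟨S₁', h₁', rfl⟩) S₂ (h₂ | ⟨S₂', h₂', rfl⟩)
        · obtain ⟨S₃, h₃, hsub⟩ := hMdir S₁ h₁ S₂ h₂
          exact ⟨S₃, Or.inl h₃, hsub⟩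
        · obtain ⟨S₃, h₃, hsub⟩ := base S₁ h₁ S₂' h₂'
          exact ⟨S₃, h₃, fun a ha => ⟨((hsub ha).1).1, (hsub ha).2⟩⟩
        · obtain ⟨S₃, h₃, hsub⟩ := base S₁' h₁' S₂ h₂
          exact ⟨S₃, h₃, fun a ha => ⟨(hsub ha).1, ((hsub ha).2).1⟩⟩
        · exact base S₁' h₁' S₂' h₂'
    have hM'M : M' ⊆ M := hMmax.le_of_ge hM'Adm (Set.subset_union_left)
    have hfinal : Smin ∩ coset g p ∈ M := hM'M (Or.inr ⟨Smin, hSmin, rfl⟩)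
    refine ⟨Smin ∩ coset g p, hfinal, ?_⟩
    intro a ha b hb
    have : a - b ∈ p := coset_sub_mem ha.2 hb.2
    exact hIsub this
  -- the filter generated by M
  set F : Filter A :=
    { sets := {s | ∃ S ∈ M, S ⊆ s}
      univ_sets := ⟨S₀, hS₀M, Set.subset_univ _⟩
      sets_of_superset := by
        rintro s t ⟨S, hS, hSs⟩ hst
        exact ⟨S, hS, hSs.trans hst⟩
      inter_sets := by
        rintro s t ⟨S₁, h₁, hs⟩ ⟨S₂, h₂, ht⟩
        obtain ⟨S₃, h₃, hsub⟩ := hMdir S₁ h₁ S₂ h₂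
        exact ⟨S₃, h₃, fun a ha => ⟨hs (hsub ha).1, ht (hsub ha).2⟩⟩ } with hF
  have hFneBot : F.NeBot := by
    rw [← Filter.forall_mem_nonempty_iff_neBot]
    rintro s ⟨S, hS, hSs⟩
    exact ((hMne S hS).mono hSs)
  have hFmem : ∀ S ∈ M, S ∈ F := fun S hS => ⟨S, hS, subset_rfl⟩
  have hcauchy : Cauchy F := by
    constructor
    · exact hFneBot
    · rw [uniformity_eq_comap_nhds_zero A, ← Filter.map_le_iff_le_comap]
      intro s hs
      obtain ⟨S, hS, hsmall⟩ := key s hs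
      rw [Filter.mem_map]
      refine Filter.mem_of_superset (Filter.prod_mem_prod (hFmem S hS) (hFmem S hS)) ?_
      rintro ⟨a, b⟩ ⟨ha, hb⟩
      exact hsmall b hb a ha
  haveI := hA.complete
  obtain ⟨x, hx⟩ := CompleteSpace.complete hcauchy
  refine ⟨x, ?_⟩
  rw [Set.mem_sInter]
  intro S hST
  have hSF : S ∈ F := hFmem S (hTM hST)
  have hcl : x ∈ closure S := by
    rw [mem_closure_iff_clusterPt]
    exact Filter.NeBot.mono hFneBot (le_inf hx (Filter.le_principal_iff.mpr hSF))
  rwa [(hclosed S hST).closure_eq] at hcl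

end LinearCompact

section Alg

variable {k : Type} [Field k]

/-- The open Jacobson radical is a two-sided ideal. -/
lemma openJacobson_mul_mem {A : Type} [Ring A] [TopologicalSpace A] [IsTopologicalRing A]
    {x : A} (hx : x ∈ openJacobson A) (b : A) : x * b ∈ openJacobson A := by
  rw [openJacobson, Submodule.mem_sInf]
  rintro m ⟨hmopen, hmmax⟩
  by_cases hb : b ∈ m
  · exact Ideal.mul_mem_left m x hb
  · -- the "annihilator-type" ideal m' = {z | z * b ∈ m} is an open maximal left ideal
    set m' : Ideal A := m.comap (LinearMap.toSpanSingleton A A b) with hm'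
    have hmem' : ∀ z : A, z ∈ m' ↔ z * b ∈ m := by
      intro z
      rw [hm', Submodule.mem_comap, LinearMap.toSpanSingleton_apply, smul_eq_mul]
    have hopen' : IsOpen (m' : Set A) := by
      have : (m' : Set A) = (fun z : A => z * b) ⁻¹' (m : Set A) := by
        ext z; exact hmem' z
      rw [this]
      exact hmopen.preimage (continuous_mul_right b)
    have hcoatom := Ideal.isMaximal_def.mp hmmax
    have hmax' : m'.IsMaximal := by
      rw [Ideal.isMaximal_def]
      constructor
      · intro h
        have h1 : (1 : A) ∈ m' := h ▸ Submodule.mem_top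
        rw [hmem', one_mul] at h1
        exact hb h1
      · intro I hI
        obtain ⟨x₀, hx₀I, hx₀m'⟩ := SetLike.exists_of_lt hI
        have hx₀b : x₀ * b ∉ m := fun h => hx₀m' ((hmem' x₀).mpr h)
        have hsup : m ⊔ Submodule.span A {x₀ * b} = ⊤ := by
          refine hcoatom.2 _ (lt_of_le_of_ne le_sup_left ?_)
          intro h
          refine hx₀b ?_
          rw [h]
          exact Submodule.mem_sup_right (Submodule.mem_span_singleton_self _)
        rw [eq_top_iff]
        intro y _
        have hy : y * b ∈ m ⊔ Submodule.span A {x₀ * b} := hsup ▸ Submodule.mem_top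
        obtain ⟨u, hu, z, hz, hyz⟩ := Submodule.mem_sup.mp hy
        obtain ⟨c, rfl⟩ := Submodule.mem_span_singleton.mp hz
        have hyc : y - c * x₀ ∈ m' := by
          rw [hmem', sub_mul, mul_assoc]
          have hcb : c • (x₀ * b) = c * (x₀ * b) := rfl
          have heq : y * b - c * (x₀ * b) = u := by rw [← hyz, hcb]; abel
          rw [heq]
          exact hu
        have h1 : y - c * x₀ ∈ I := hI.le hyc
        have h2 : c * x₀ ∈ I := I.smul_mem c hx₀I
        have := I.add_mem h1 h2
        rwa [sub_add_cancel] at this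
    have : x ∈ m' := by
      have := Submodule.mem_sInf.mp hx m' ⟨hopen', hmax'⟩
      exact this
    exact (hmem' x).mp this

lemma isClosed_openJacobson {A : Type} [Ring A] [TopologicalSpace A] [IsTopologicalRing A] :
    IsClosed ((openJacobson A : Ideal A) : Set A) := by
  rw [openJacobson, Submodule.coe_sInf]
  refine isClosed_biInter ?_
  rintro I ⟨hIopen, _⟩
  exact AddSubgroup.isClosed_of_isOpen I.toAddSubgroup hIopen

lemma Jpow_two_le {A : Type} [Ring A] [Algebra k A] [TopologicalSpace A] [IsTopologicalRing A] :
    Jpow k A 2 ≤ Jrad k A := by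
  have h2 : Jpow k A 2 = Jrad k A * Jrad k A := rfl
  rw [h2]
  rw [Submodule.mul_le]
  intro m _ n hn
  show m * n ∈ (openJacobson A).restrictScalars k
  exact Ideal.mul_mem_left _ m hn

lemma fd_quotient_of_le {A : Type} [Ring A] [Algebra k A] {p q : Submodule k A} (h : p ≤ q)
    (hfd : FiniteDimensional k (A ⧸ p)) : FiniteDimensional k (A ⧸ q) := by
  haveI := hfd
  refine Module.Finite.of_surjective (Submodule.mapQ p q LinearMap.id h) ?_
  intro y
  obtain ⟨x, rfl⟩ := Submodule.Quotient.mk_surjective q y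
  exact ⟨Submodule.Quotient.mk x, by simp [Submodule.mapQ_apply]⟩

section Glue

variable {R M : Type} [Ring R] [AddCommGroup M] [Module R M]

lemma comap_map_mkQ_eq {p m : Submodule R M} (hpm : p ≤ m) :
    (m.map p.mkQ).comap p.mkQ = m := by
  rw [Submodule.comap_map_eq, Submodule.ker_mkQ, sup_eq_left.mpr hpm]

lemma coatom_map_mkQ {p m : Submodule R M} (hpm : p ≤ m) (hm : IsCoatom m) :
    IsCoatom (m.map p.mkQ) := by
  constructor
  · intro h
    have : m = ⊤ := by
      rw [← comap_map_mkQ_eq hpm, h, Submodule.comap_top]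
    exact hm.1 this
  · intro P' hP'
    have h1 : m ≤ P'.comap p.mkQ := by
      rw [← comap_map_mkQ_eq hpm]
      exact Submodule.comap_mono hP'.le
    have h2 : m ≠ P'.comap p.mkQ := by
      intro h
      have : P' = m.map p.mkQ := by
        rw [h, Submodule.map_comap_eq, Submodule.range_mkQ, top_inf_eq]
      exact hP'.ne' this
    have := hm.2 _ (lt_of_le_of_ne h1 h2)
    rw [eq_top_iff]
    intro y _
    obtain ⟨x, rfl⟩ := Submodule.Quotient.mk_surjective p y
    have hx : x ∈ P'.comap p.mkQ := this ▸ Submodule.mem_top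
    rwa [Submodule.mem_comap, Submodule.mkQ_apply] at hx

lemma coatom_comap_mkQ {p : Submodule R M} {P : Submodule R (M ⧸ p)} (hP : IsCoatom P) :
    IsCoatom (P.comap p.mkQ) := by
  have hmc : (P.comap p.mkQ).map p.mkQ = P := by
    rw [Submodule.map_comap_eq, Submodule.range_mkQ, top_inf_eq]
  constructor
  · intro h
    have : P = ⊤ := by rw [← hmc, h, Submodule.map_top, Submodule.range_mkQ]
    exact hP.1 this
  · intro m' hm'
    have hple : p ≤ P.comap p.mkQ := by
      intro x hx
      rw [Submodule.mem_comap, Submodule.mkQ_apply, (Submodule.Quotient.mk_eq_zero p).mpr hx]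
      exact P.zero_mem
    have h1 : P ≤ m'.map p.mkQ := by
      rw [← hmc]
      exact Submodule.map_mono hm'.le
    have h2 : P ≠ m'.map p.mkQ := by
      intro h
      obtain ⟨x, hxm', hxP⟩ := SetLike.exists_of_lt hm'
      refine hxP ?_
      rw [Submodule.mem_comap, h]
      exact Submodule.mem_map_of_mem hxm'
    have htop := hP.2 _ (lt_of_le_of_ne h1 h2)
    have : m' ⊔ p = ⊤ := by
      have hc := congrArg (Submodule.comap p.mkQ) htop
      rwa [Submodule.comap_map_eq, Submodule.ker_mkQ, Submodule.comap_top] at hc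
    rw [← this, sup_eq_left.mpr (hple.trans hm'.le)]

end Glue

end Alg

section Semis

variable {k : Type} [Field k] {R M : Type} [Ring R] [AddCommGroup M] [Module R M]
  [SMul k R] [Module k M] [IsScalarTower k R M] [FiniteDimensional k M]

include k in
lemma finrank_lt_of_lt {p q : Submodule R M} (h : p < q) :
    Module.finrank k (p.restrictScalars k) < Module.finrank k (q.restrictScalars k) := by
  apply Submodule.finrank_lt_finrank_of_lt
  refine lt_of_le_of_ne (fun x hx => h.le hx) ?_
  intro e
  exact h.ne (Submodule.restrictScalars_injective k R M e)

include k in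
/-- A finite dimensional module whose nonzero elements are separated by maximal submodules
is semisimple. -/
lemma semisimple_of_coatoms
    (h : ∀ y : M, y ≠ 0 → ∃ P : Submodule R M, IsCoatom P ∧ y ∉ P) :
    IsSemisimpleModule R M := by
  classical
  set ranks : Set ℕ := {n | ∃ s : Finset (Submodule R M), (∀ P ∈ s, IsCoatom P) ∧
      Module.finrank k ((s.inf id).restrictScalars k) = n} with hranks
  have hne : ranks.Nonempty := ⟨_, ∅, by simp, rfl⟩
  obtain ⟨s₀, hs₀, hrank⟩ := Nat.sInf_mem hne
  have hbot : s₀.inf id = ⊥ := by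
    by_contra hb
    obtain ⟨y, hymem, hy0⟩ := (Submodule.ne_bot_iff _).mp hb
    obtain ⟨P, hPcoatom, hyP⟩ := h y hy0
    have hlt : (insert P s₀).inf id < s₀.inf id := by
      rw [Finset.inf_insert]
      refine lt_of_le_of_ne inf_le_right ?_
      intro e
      have hle : s₀.inf id ≤ id P := e ▸ inf_le_left
      exact hyP (hle hymem)
    have hrlt := finrank_lt_of_lt (k := k) hlt
    have hmem : Module.finrank k (((insert P s₀).inf id).restrictScalars k) ∈ ranks := by
      refine ⟨insert P s₀, ?_, rfl⟩
      intro Q hQ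
      rcases Finset.mem_insert.mp hQ with rfl | hQ
      · exact hPcoatom
      · exact hs₀ Q hQ
    have hmin := Nat.sInf_le hmem
    omega
  have hsimple : ∀ P : s₀, IsSimpleModule R (M ⧸ (P : Submodule R M)) := fun P =>
    isSimpleModule_iff_isCoatom.mpr (hs₀ P P.2)
  set f : M →ₗ[R] (∀ P : s₀, M ⧸ (P : Submodule R M)) :=
    LinearMap.pi (fun P => (P : Submodule R M).mkQ) with hf
  have hker : Function.Injective f := by
    rw [← LinearMap.ker_eq_bot, eq_bot_iff]
    intro x hx
    have hx' : ∀ P : s₀, (P : Submodule R M).mkQ x = 0 := by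
      intro P
      exact congrFun (LinearMap.mem_ker.mp hx) P
    have hxin : ∀ P ∈ s₀, x ∈ P := by
      intro P hP
      have := hx' ⟨P, hP⟩
      rwa [Submodule.mkQ_apply, Submodule.Quotient.mk_eq_zero] at this
    have : x ∈ s₀.inf id := by
      rw [Submodule.mem_finsetInf]
      exact fun i hi => hxin i hi
    rwa [hbot] at this
  haveI hss : IsSemisimpleModule R (∀ P : s₀, M ⧸ (P : Submodule R M)) := by
    refine isSemisimpleModule_of_isSemisimpleModule_submodule'
      (p := fun P => LinearMap.range (LinearMap.single R _ P)) (fun P => ?_)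
      (LinearMap.iSup_range_single _ _)
    haveI := hsimple P
    exact IsSemisimpleModule.range _
  exact IsSemisimpleModule.congr (LinearEquiv.ofInjective f hker)

include k in
/-- In a finite dimensional semisimple module, any submodule avoiding an element can be
enlarged to a maximal submodule avoiding it. -/
lemma exists_coatom_avoiding [IsSemisimpleModule R M]
    (N : Submodule R M) {y : M} (hy : y ∉ N) :
    ∃ P : Submodule R M, IsCoatom P ∧ N ≤ P ∧ y ∉ P := by
  set cand : Set ℕ := (fun Q : Submodule R M => Module.finrank k (Q.restrictScalars k)) ''
    {Q | N ≤ Q ∧ y ∉ Q} with hcand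
  have hne : cand.Nonempty := ⟨_, N, ⟨le_rfl, hy⟩, rfl⟩
  have hbdd : BddAbove cand := by
    refine ⟨Module.finrank k M, ?_⟩
    rintro n ⟨Q, _, rfl⟩
    exact Submodule.finrank_le _
  obtain ⟨Q, ⟨hNQ, hyQ⟩, hQrank⟩ := Nat.sSup_mem hne hbdd
  have hmax : ∀ Q' : Submodule R M, Q < Q' → y ∈ Q' := by
    intro Q' hQ'
    by_contra hyQ'
    have h1 : Module.finrank k (Q'.restrictScalars k) ∈ cand :=
      ⟨Q', ⟨hNQ.trans hQ'.le, hyQ'⟩, rfl⟩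
    have h2 := le_csSup hbdd h1
    have h3 := finrank_lt_of_lt (k := k) hQ'
    have hQrank' : Module.finrank k (Q.restrictScalars k) = sSup cand := hQrank
    omega
  refine ⟨Q, ⟨fun htop => hyQ (htop ▸ Submodule.mem_top), ?_⟩, hNQ, hyQ⟩
  intro Q' hQ'
  obtain ⟨C', hC'⟩ := exists_isCompl Q'
  rcases eq_or_lt_of_le (le_sup_left : Q ≤ Q ⊔ C') with heq | hlt
  · have hC'Q : C' ≤ Q := by
      intro c hc
      have hcm : c ∈ Q ⊔ C' := Submodule.mem_sup_right hc
      rwa [← heq] at hcm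
    have hC'bot : C' = ⊥ := by
      rw [eq_bot_iff]
      exact hC'.disjoint (hC'Q.trans hQ'.le) le_rfl
    have hcod := hC'.codisjoint
    rw [codisjoint_iff] at hcod
    rw [← hcod, hC'bot, sup_bot_eq]
  · exfalso
    have hy1 : y ∈ Q ⊔ C' := hmax _ hlt
    have hy2 : y ∈ Q' := hmax _ hQ'
    have hmod : (Q ⊔ C') ⊓ Q' = Q ⊔ C' ⊓ Q' := sup_inf_assoc_of_le C' hQ'.le
    have hdisj : C' ⊓ Q' = ⊥ := by
      rw [inf_comm]
      exact hC'.disjoint.eq_bot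
    have hyQ' : y ∈ Q ⊔ C' ⊓ Q' := hmod ▸ Submodule.mem_inf.mpr ⟨hy1, hy2⟩
    rw [hdisj, sup_bot_eq] at hyQ'
    exact hyQ hyQ'

end Semis

section Core

variable {k : Type} [Field k]
variable {A B : Type} [Ring A] [Algebra k A] [UniformSpace A] [IsUniformAddGroup A]
  [IsTopologicalRing A] [Ring B] [Algebra k B] [UniformSpace B] [IsUniformAddGroup B]
  [IsTopologicalRing B]

/-- Core algebraic step: if `α x` lies in the open Jacobson radical of `B`, then
`x ∈ J(A) + α⁻¹(V)` for every open ideal `V` of `B`. -/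
theorem mem_sup_of_image_mem
    (hJAfd : FiniteDimensional k (A ⧸ Jrad k A))
    (α : A →ₐ[k] B) (hcont : Continuous α) (hsurj : Function.Surjective α)
    (V : Ideal B) (hVopen : IsOpen (V : Set B))
    {x : A} (hx : α x ∈ openJacobson B) :
    x ∈ (openJacobson A ⊔ V.comap α.toRingHom : Ideal A) := by
  by_contra hxJK
  set J : Ideal A := openJacobson A with hJ
  set K : Ideal A := V.comap α.toRingHom with hK
  haveI hres : FiniteDimensional k (A ⧸ (J.restrictScalars k)) := hJAfd
  haveI hfdq : FiniteDimensional k (A ⧸ J) :=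
    Module.Finite.equiv (Submodule.Quotient.restrictScalarsEquiv k J)
  -- A ⧸ J is a semisimple A-module
  haveI hsemi : IsSemisimpleModule A (A ⧸ J) := by
    refine semisimple_of_coatoms (k := k) ?_
    intro y hy
    obtain ⟨x₀, rfl⟩ := Submodule.Quotient.mk_surjective J y
    have hx₀ : x₀ ∉ J := by
      intro h
      exact hy ((Submodule.Quotient.mk_eq_zero J).mpr h)
    have hnot : ¬ ∀ m ∈ {I : Ideal A | IsOpen (I : Set A) ∧ I.IsMaximal}, x₀ ∈ m := by
      intro h
      exact hx₀ (Submodule.mem_sInf.mpr h)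
    push_neg at hnot
    obtain ⟨m, hmS, hx₀m⟩ := hnot
    have hJm : J ≤ m := sInf_le hmS
    refine ⟨Submodule.map J.mkQ (m : Submodule A A), coatom_map_mkQ hJm (Ideal.isMaximal_def.mp hmS.2), ?_⟩
    intro hmem
    rw [← Submodule.mkQ_apply] at hmem
    have h2 : x₀ ∈ Submodule.comap J.mkQ (Submodule.map J.mkQ (m : Submodule A A)) := Submodule.mem_comap.mpr hmem
    rw [comap_map_mkQ_eq hJm] at h2
    exact hx₀m h2
  -- the class of x avoids the image of K in A/J
  have hyN : J.mkQ x ∉ Submodule.map J.mkQ (K : Submodule A A) := by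
    intro hmem
    have hcm := Submodule.comap_map_eq J.mkQ (K : Submodule A A)
    rw [Submodule.ker_mkQ] at hcm
    have hx2 : x ∈ Submodule.comap J.mkQ (Submodule.map J.mkQ (K : Submodule A A)) := Submodule.mem_comap.mpr hmem
    rw [hcm] at hx2
    rw [sup_comm] at hx2
    exact hxJK hx2
  obtain ⟨P, hPcoatom, hNP, hyP⟩ :=
    exists_coatom_avoiding (k := k) (Submodule.map J.mkQ (K : Submodule A A)) hyN
  set m : Ideal A := Submodule.comap J.mkQ P with hm
  have hmcoatom : IsCoatom (m : Submodule A A) := coatom_comap_mkQ hPcoatom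
  have hKm : K ≤ m := by
    intro z hz
    have h1 : J.mkQ z ∈ Submodule.map J.mkQ (K : Submodule A A) := Submodule.mem_map_of_mem hz
    exact Submodule.mem_comap.mpr (hNP h1)
  have hxm : x ∉ m := fun h => hyP (Submodule.mem_comap.mp h)
  have hKopen : IsOpen (K : Set A) := by
    have hKset : (K : Set A) = ⇑α ⁻¹' (V : Set B) := rfl
    rw [hKset]
    exact hVopen.preimage hcont
  have hKm' : (K : Ideal A).toAddSubgroup ≤ m.toAddSubgroup := fun z hz => hKm hz
  have hmopen : IsOpen ((m : Ideal A) : Set A) :=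
    AddSubgroup.isOpen_mono hKm' hKopen
  have hker : RingHom.ker α.toRingHom ≤ K := by
    intro z hz
    have hz0 : α z = 0 := hz
    show α.toRingHom z ∈ V
    rw [AlgHom.toRingHom_eq_coe]
    show α z ∈ V
    rw [hz0]
    exact V.zero_mem
  -- the image of m is an open maximal left ideal of B
  set n : Ideal B :=
    { carrier := ⇑α '' (m : Set A)
      add_mem' := by
        rintro b₁ b₂ ⟨a₁, ha₁, rfl⟩ ⟨a₂, ha₂, rfl⟩
        exact ⟨a₁ + a₂, m.add_mem ha₁ ha₂, map_add α a₁ a₂⟩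
      zero_mem' := ⟨0, m.zero_mem, map_zero α⟩
      smul_mem' := by
        rintro c y ⟨a, ham, rfl⟩
        obtain ⟨d, rfl⟩ := hsurj c
        refine ⟨d * a, m.smul_mem d ham, ?_⟩
        rw [map_mul]
        rfl } with hn
  have hmemn : ∀ y : B, y ∈ n ↔ y ∈ ⇑α '' (m : Set A) := fun y => Iff.rfl
  have hnne : n ≠ ⊤ := by
    intro h
    have h1 : (1 : B) ∈ n := h ▸ Submodule.mem_top
    obtain ⟨z, hzm, hz1⟩ := (hmemn 1).mp h1
    have hker1 : (1 : A) - z ∈ RingHom.ker α.toRingHom := by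
      rw [RingHom.mem_ker]
      show α (1 - z) = 0
      rw [map_sub, map_one, hz1, sub_self]
    have h2 : (1 : A) ∈ m := by
      have h3 := m.add_mem (hKm (hker hker1)) hzm
      rwa [sub_add_cancel] at h3
    exact hmcoatom.1 ((Ideal.eq_top_iff_one m).mpr h2)
  have hnmax : n.IsMaximal := by
    rw [Ideal.isMaximal_def]
    refine ⟨hnne, ?_⟩
    intro I hI
    obtain ⟨b₀, hb₀I, hb₀n⟩ := SetLike.exists_of_lt hI
    obtain ⟨a₀, rfl⟩ := hsurj b₀
    have ha₀m : a₀ ∉ m := fun h => hb₀n ((hmemn _).mpr ⟨a₀, h, rfl⟩)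
    have hlt : (m : Ideal A) < I.comap α.toRingHom := by
      refine lt_of_le_of_ne ?_ ?_
      · intro z hz
        have hzn : α z ∈ n := (hmemn _).mpr ⟨z, hz, rfl⟩
        exact Ideal.mem_comap.mpr (hI.le hzn)
      · intro h
        refine ha₀m ?_
        rw [h]
        exact Ideal.mem_comap.mpr hb₀I
    have htop := hmcoatom.2 _ hlt
    rw [eq_top_iff]
    intro y _
    obtain ⟨a, rfl⟩ := hsurj y
    have haI : a ∈ I.comap α.toRingHom := htop ▸ Submodule.mem_top
    exact Ideal.mem_comap.mp haI
  have hVn : V.toAddSubgroup ≤ n.toAddSubgroup := by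
    intro v hv
    obtain ⟨w, rfl⟩ := hsurj v
    exact (hmemn _).mpr ⟨w, hKm (Ideal.mem_comap.mpr hv), rfl⟩
  have hnopen : IsOpen (n : Set B) := AddSubgroup.isOpen_mono hVn hVopen
  have hJBn : openJacobson B ≤ n := sInf_le ⟨hnopen, hnmax⟩
  obtain ⟨z, hzm, hzx⟩ := (hmemn _).mp (hJBn hx)
  have hker2 : x - z ∈ RingHom.ker α.toRingHom := by
    rw [RingHom.mem_ker]
    show α (x - z) = 0
    rw [map_sub, hzx, sub_self]
  have hxmem : x ∈ m := by
    have h2 := m.add_mem (hKm (hker hker2)) hzm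
    rwa [sub_add_cancel] at h2
  exact hxm hxmem

end Core

section Final

variable {k : Type} [Field k]
variable {A B : Type} [Ring A] [Algebra k A] [UniformSpace A] [IsUniformAddGroup A]
  [IsTopologicalRing A] [Ring B] [Algebra k B] [UniformSpace B] [IsUniformAddGroup B]
  [IsTopologicalRing B]

theorem openJacobson_subset_image
    (hA : IsPseudocompactAlgebra k A) (hB : IsPseudocompactAlgebra k B)
    (hJAfd : FiniteDimensional k (A ⧸ Jrad k A))
    (α : A →ₐ[k] B) (hcont : Continuous α) (hsurj : Function.Surjective α) :
    ((openJacobson B : Ideal B) : Set B) ⊆ ⇑α '' ((Jrad k A : Submodule k A) : Set A) := by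
  intro b hb
  classical
  set T : Set (Set A) := {S | ∃ V : Ideal B, IsOpen (V : Set B) ∧
      S = {a : A | a ∈ Jrad k A ∧ α a - b ∈ V}} with hT
  have hmem : ∀ V : Ideal B, IsOpen (V : Set B) →
      ∃ j : A, j ∈ Jrad k A ∧ α j - b ∈ V := by
    intro V hV
    obtain ⟨x₀, hx₀⟩ := hsurj b
    have hx₀J : x₀ ∈ (openJacobson A ⊔ V.comap α.toRingHom : Ideal A) :=
      mem_sup_of_image_mem hJAfd α hcont hsurj V hV (by rw [hx₀]; exact hb)
    obtain ⟨j, hj, w, hw, hjw⟩ := Submodule.mem_sup.mp hx₀J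
    refine ⟨j, hj, ?_⟩
    have heq : α j - b = -(α w) := by
      rw [← hx₀, ← hjw, map_add]
      abel
    rw [heq]
    exact V.neg_mem (Ideal.mem_comap.mp hw)
  have hcoset : ∀ S ∈ T, ∃ (x : A) (p : Submodule k A), S = coset x p := by
    rintro S ⟨V, hV, rfl⟩
    obtain ⟨j, hjJ, hjV⟩ := hmem V hV
    refine ⟨j, Jrad k A ⊓ (V.restrictScalars k).comap α.toLinearMap, ?_⟩
    ext y
    simp only [Set.mem_setOf_eq, mem_coset, Submodule.mem_inf, Submodule.mem_comap]
    constructor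
    · rintro ⟨hyJ, hyV⟩
      refine ⟨sub_mem hyJ hjJ, ?_⟩
      show α (y - j) ∈ (V.restrictScalars k)
      rw [map_sub]
      have heq : α y - α j = (α y - b) - (α j - b) := by abel
      rw [heq]
      exact sub_mem hyV hjV
    · rintro ⟨h1, h2⟩
      have h2' : α (y - j) ∈ V := h2
      constructor
      · have h3 := add_mem h1 hjJ
        rwa [sub_add_cancel] at h3
      · rw [map_sub] at h2'
        have heq : α y - b = (α y - α j) + (α j - b) := by abel
        rw [heq]
        exact V.add_mem h2' hjV
  have hclosed : ∀ S ∈ T, IsClosed S := by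
    rintro S ⟨V, hV, rfl⟩
    have heq : {a : A | a ∈ Jrad k A ∧ α a - b ∈ V} =
        ((openJacobson A : Ideal A) : Set A) ∩ ((fun a : A => α a - b) ⁻¹' (V : Set B)) := rfl
    rw [heq]
    refine IsClosed.inter isClosed_openJacobson ?_
    exact (AddSubgroup.isClosed_of_isOpen V.toAddSubgroup hV).preimage (hcont.sub continuous_const)
  have hdir : ∀ S₁ ∈ T, ∀ S₂ ∈ T, ∃ S₃ ∈ T, S₃ ⊆ S₁ ∩ S₂ := by
    rintro S₁ ⟨V₁, hV₁, rfl⟩ S₂ ⟨V₂, hV₂, rfl⟩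
    have hnb : (V₁ : Set B) ∩ (V₂ : Set B) ∈ nhds (0 : B) :=
      Filter.inter_mem (hV₁.mem_nhds V₁.zero_mem) (hV₂.mem_nhds V₂.zero_mem)
    obtain ⟨V₃, _, hV₃open, _, hV₃sub⟩ := hB.basis _ hnb
    refine ⟨{a : A | a ∈ Jrad k A ∧ α a - b ∈ V₃}, ⟨V₃, hV₃open, rfl⟩, ?_⟩
    rintro a ⟨haJ, haV⟩
    have hsub := hV₃sub haV
    exact ⟨⟨haJ, hsub.1⟩, haJ, hsub.2⟩
  have htopopen : IsOpen ((⊤ : Ideal B) : Set B) := by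
    rw [Submodule.top_coe]
    exact isOpen_univ
  have hne : T.Nonempty := ⟨_, ⊤, htopopen, rfl⟩
  obtain ⟨a, ha⟩ := pc_linearlyCompact hA hne hcoset hclosed hdir
  have haJ : a ∈ Jrad k A := ((Set.mem_sInter.mp ha) _ ⟨⊤, htopopen, rfl⟩).1
  refine ⟨a, haJ, ?_⟩
  by_contra hne'
  have hd : (0 : B) ∉ ({α a - b} : Set B) := by
    simp only [Set.mem_singleton_iff]
    intro h
    exact hne' (by rw [← sub_eq_zero, ← h])
  haveI := hB.t2
  have hnb : ({α a - b}ᶜ : Set B) ∈ nhds (0 : B) := isOpen_compl_singleton.mem_nhds hd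
  obtain ⟨V, _, hVopen, _, hVsub⟩ := hB.basis _ hnb
  have haV : α a - b ∈ V := ((Set.mem_sInter.mp ha) _ ⟨V, hVopen, rfl⟩).2
  exact (hVsub haV) rfl

theorem image_jrad_subset
    (α : A →ₐ[k] B) (hcont : Continuous α) (hsurj : Function.Surjective α) :
    ⇑α '' ((Jrad k A : Submodule k A) : Set A) ⊆ ((openJacobson B : Ideal B) : Set B) := by
  rintro _ ⟨x, hx, rfl⟩
  rw [SetLike.mem_coe, openJacobson, Submodule.mem_sInf]
  rintro n ⟨hnopen, hnmax⟩
  haveI := hnmax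
  have hcomax : (Ideal.comap α.toRingHom n).IsMaximal :=
    Ideal.comap_isMaximal_of_surjective α.toRingHom hsurj
  have hcoopen : IsOpen ((Ideal.comap α.toRingHom n : Ideal A) : Set A) := by
    have heq : ((Ideal.comap α.toRingHom n : Ideal A) : Set A) = ⇑α ⁻¹' (n : Set B) := rfl
    rw [heq]
    exact hnopen.preimage hcont
  have hx' : x ∈ openJacobson A := hx
  have hmem := Submodule.mem_sInf.mp hx' (Ideal.comap α.toRingHom n) ⟨hcoopen, hcomax⟩
  exact Ideal.mem_comap.mp hmem

end Final

end PCthm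

/-- Let `A`, `B` be pseudocompact `k`-algebras with `A/J²(A)` and `B/J²(B)`
finite dimensional, and `α : A → B` a continuous surjective algebra homomorphism.  Then
`α(Jⁿ(A)) = Jⁿ(B)` for every `n ≥ 0`. -/
theorem image_Jpow_eq_Jpow
    (k : Type) [Field k] [PerfectField k]
    (A : Type) [Ring A] [Algebra k A] [UniformSpace A] [IsUniformAddGroup A] [IsTopologicalRing A]
    (B : Type) [Ring B] [Algebra k B] [UniformSpace B] [IsUniformAddGroup B] [IsTopologicalRing B]
    (hA : IsPseudocompactAlgebra k A) (hB : IsPseudocompactAlgebra k B)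
    (hAfd : FiniteDimensional k (A ⧸ Jpow k A 2))
    (hBfd : FiniteDimensional k (B ⧸ Jpow k B 2))
    (α : A →ₐ[k] B) (hcont : Continuous α) (hsurj : Function.Surjective α) :
    ∀ n : ℕ, (⇑α) '' (Jpow k A n : Set A) = (Jpow k B n : Set B) := by
  have hJA : FiniteDimensional k (A ⧸ Jrad k A) := PCthm.fd_quotient_of_le PCthm.Jpow_two_le hAfd
  have h1 : Submodule.map α.toLinearMap (Jrad k A) = Jrad k B := by
    apply SetLike.coe_injective
    rw [Submodule.map_coe]
    apply Set.Subset.antisymm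
    · exact PCthm.image_jrad_subset α hcont hsurj
    · exact PCthm.openJacobson_subset_image hA hB hJA α hcont hsurj
  have hmap : ∀ n, Submodule.map α.toLinearMap (Jpow k A n) = Jpow k B n := by
    intro n
    induction n with
    | zero =>
      show Submodule.map α.toLinearMap ⊤ = ⊤
      rw [Submodule.map_top, LinearMap.range_eq_top]
      exact hsurj
    | succ m ih =>
      cases m with
      | zero => exact h1
      | succ l =>
        have e1 : Jpow k A (l + 2) = Jrad k A * Jpow k A (l + 1) := rfl
        have e2 : Jpow k B (l + 2) = Jrad k B * Jpow k B (l + 1) := rfl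
        rw [e1, e2, Submodule.map_mul, h1, ih]
  intro n
  rw [← hmap n, Submodule.map_coe]
  rfl
end

section
/- Let A be a pseudocompact k-algebra such that A/J²(A) is finite dimensional over k. Then A is complete with respect to the J-adic topology; that is, the canonical map A → lim_{n∈ℕ} A/Jⁿ(A) induced by the quotient maps A → A/Jⁿ(A) is an isomorphism. -/
open Filter Topology
section
variable {k : Type} [Field k] {A : Type} [Ring A] [Algebra k A]
  [UniformSpace A] [IsUniformAddGroup A] [IsTopologicalRing A]

/-- basic ideal predicate -/
def IsBasicIdeal (k : Type) [Field k] {A : Type} [Ring A] [Algebra k A] [TopologicalSpace A]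
    (I : Ideal A) : Prop :=
  (∀ x ∈ I, ∀ b : A, x * b ∈ I) ∧ IsOpen (I : Set A) ∧
    FiniteDimensional k (A ⧸ I.restrictScalars k)

theorem basic_exists (hA : IsPseudocompactAlgebra k A) {s : Set A} (hs : s ∈ 𝓝 (0 : A)) :
    ∃ I : Ideal A, IsBasicIdeal k I ∧ (I : Set A) ⊆ s := by
  obtain ⟨I, h1, h2, h3, h4⟩ := hA.basis s hs
  exact ⟨I, ⟨h1, h2, h3⟩, h4⟩

theorem eq_zero_of_forall_nhds (hA : IsPseudocompactAlgebra k A) {x : A}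
    (h : ∀ s ∈ 𝓝 (0 : A), x ∈ s) : x = 0 := by
  have := hA.t2
  by_contra hx
  exact (h _ ((isOpen_compl_singleton (x := x)).mem_nhds (by simpa using (Ne.symm hx)))) rfl

theorem eq_zero_of_forall_basic (hA : IsPseudocompactAlgebra k A) {x : A}
    (h : ∀ I : Ideal A, IsBasicIdeal k I → x ∈ I) : x = 0 := by
  refine eq_zero_of_forall_nhds hA fun s hs => ?_
  obtain ⟨I, hI, hIs⟩ := basic_exists hA hs
  exact hIs (h I hI)
end
set_option linter.unusedSectionVars false
section
variable {k : Type} [Field k] {A : Type} [Ring A] [Algebra k A]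
  [UniformSpace A] [IsUniformAddGroup A] [IsTopologicalRing A]

theorem ideal_isOpen_mono {I M : Ideal A} (h : I ≤ M) (hI : IsOpen (I : Set A)) :
    IsOpen (M : Set A) :=
  AddSubgroup.isOpen_mono (H₁ := I.toAddSubgroup) (H₂ := M.toAddSubgroup) h hI

theorem ideal_isClosed_of_isOpen {M : Ideal A} (hM : IsOpen (M : Set A)) :
    IsClosed (M : Set A) :=
  AddSubgroup.isClosed_of_isOpen M.toAddSubgroup hM

/-- key colon-ideal lemma: if `P` is "coatom below `T`", `s ∈ T \ P`, and `P` contains a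
basic (open two-sided) ideal, then `J(A) * s ⊆ P`. -/
theorem jacobson_smul_mem (hA : IsPseudocompactAlgebra k A) {P T I : Ideal A}
    (hI : IsBasicIdeal k I) (hIP : I ≤ P) (hPT : P ≤ T)
    (hco : ∀ N : Ideal A, P < N → N ≤ T → N = T) {s : A} (hsT : s ∈ T) (hsP : s ∉ P) :
    ∀ x ∈ openJacobson A, x * s ∈ P := by
  set M : Ideal A := Submodule.comap (LinearMap.toSpanSingleton A A s) P with hM
  have hmemM : ∀ a : A, a ∈ M ↔ a * s ∈ P := fun a => Iff.rfl
  -- M is open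
  have hIM : I ≤ M := fun x hx => by
    show x • s ∈ P
    exact hIP (hI.1 x hx s)
  have hMopen : IsOpen (M : Set A) := ideal_isOpen_mono hIM hI.2.1
  -- M is maximal
  have hMmax : M.IsMaximal := by
    rw [Ideal.isMaximal_def]
    constructor
    · intro htop
      have h1M : (1:A) ∈ M := htop.ge Submodule.mem_top
      have : (1:A) • s ∈ P := h1M
      rw [one_smul] at this
      exact hsP this
    · intro N hMN
      obtain ⟨y, hyN, hyM⟩ := SetLike.exists_of_lt hMN
      have hys : y * s ∉ P := hyM
      set N' : Ideal A := Submodule.map (LinearMap.toSpanSingleton A A s) N ⊔ P with hN'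
      have hPN' : P < N' := by
        refine lt_of_le_of_ne le_sup_right fun he => ?_
        have : y * s ∈ N' := Submodule.mem_sup_left (Submodule.mem_map_of_mem hyN)
        rw [← he] at this
        exact hys this
      have hN'T : N' ≤ T := by
        refine sup_le ?_ hPT
        rintro _ ⟨a, _, rfl⟩
        exact T.smul_mem a hsT
      have hN'eq : N' = T := hco N' hPN' hN'T
      -- now show N = ⊤
      rw [Ideal.eq_top_iff_one]
      have h1 : ∀ x : A, x ∈ N := by
        intro x
        have hxs : x * s ∈ N' := hN'eq ▸ T.smul_mem x hsT
        rw [hN', Submodule.mem_sup] at hxs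
        obtain ⟨u, hu, p, hp, hups⟩ := hxs
        obtain ⟨n, hn, rfl⟩ := hu
        have hxn : x - n ∈ M := by
          show (x - n) • s ∈ P
          have hns : (LinearMap.toSpanSingleton A A s) n = n * s := rfl
          rw [hns] at hups
          rw [smul_eq_mul, sub_mul, ← hups, add_sub_cancel_left]
          exact hp
        have := N.add_mem (hMN.le hxn) hn
        simpa using this
      exact h1 1
  intro x hx
  exact (sInf_le ⟨hMopen, hMmax⟩ : openJacobson A ≤ M) hx

theorem jrad_mul_right (hA : IsPseudocompactAlgebra k A) :
    ∀ x ∈ Jrad k A, ∀ b : A, x * b ∈ Jrad k A := by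
  intro x hx b
  have hx' : x ∈ openJacobson A := hx
  show x * b ∈ openJacobson A
  rw [openJacobson, Submodule.mem_sInf]
  rintro M ⟨hMo, hMm⟩
  by_cases hbM : b ∈ M
  · exact M.smul_mem x hbM
  · obtain ⟨I, hI, hIM⟩ := basic_exists hA (hMo.mem_nhds M.zero_mem)
    refine jacobson_smul_mem hA hI hIM le_top (fun N hN _ => ?_) Submodule.mem_top hbM x hx'
    exact (hMm.1.2 N hN)
end
set_option linter.unusedSectionVars false
section
variable {k : Type} [Field k] {A : Type} [Ring A] [Algebra k A]
  [UniformSpace A] [IsUniformAddGroup A] [IsTopologicalRing A]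

theorem top_mul_jrad : (⊤ : Submodule k A) * Jrad k A = Jrad k A := by
  refine le_antisymm (Submodule.mul_le.2 fun a _ x hx => ?_) (fun x hx => ?_)
  · exact (openJacobson A).smul_mem a hx
  · simpa using Submodule.mul_mem_mul (Submodule.mem_top : (1:A) ∈ ⊤) hx

theorem jpow_succ (hA : IsPseudocompactAlgebra k A) (n : ℕ) :
    Jpow k A (n + 1) = Jrad k A * Jpow k A n := by
  cases n with
  | zero =>
    show Jrad k A = Jrad k A * ⊤
    refine le_antisymm (fun x hx => ?_) (Submodule.mul_le.2 fun x hx a _ => ?_)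
    · simpa using Submodule.mul_mem_mul hx (Submodule.mem_top : (1:A) ∈ ⊤)
    · exact jrad_mul_right hA x hx a
  | succ m => rfl

theorem top_mul_jpow (hA : IsPseudocompactAlgebra k A) (n : ℕ) :
    (⊤ : Submodule k A) * Jpow k A n ≤ Jpow k A n := by
  cases n with
  | zero => exact le_top
  | succ m =>
    rw [jpow_succ hA m, ← mul_assoc, top_mul_jrad]

theorem mem_jpow_of_mul_left (hA : IsPseudocompactAlgebra k A) (n : ℕ) (a : A) {x : A}
    (hx : x ∈ Jpow k A n) : a * x ∈ Jpow k A n :=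
  top_mul_jpow hA n (Submodule.mul_mem_mul Submodule.mem_top hx)

theorem jpow_antitone_succ (hA : IsPseudocompactAlgebra k A) (n : ℕ) :
    Jpow k A (n + 1) ≤ Jpow k A n := by
  induction n with
  | zero => exact le_top
  | succ m ih =>
    have h2 : Jrad k A * Jpow k A (m+1) ≤ Jrad k A * Jpow k A m :=
      mul_le_mul' le_rfl ih
    rw [← jpow_succ hA (m+1), ← jpow_succ hA m] at h2
    exact h2

theorem jpow_antitone (hA : IsPseudocompactAlgebra k A) {m n : ℕ} (h : m ≤ n) :
    Jpow k A n ≤ Jpow k A m := by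
  induction n with
  | zero => simpa using (Nat.le_zero.mp h) ▸ le_rfl
  | succ p ih =>
    rcases Nat.lt_or_ge m (p+1) with hlt | hge
    · exact le_trans (jpow_antitone_succ hA p) (ih (Nat.lt_succ_iff.mp hlt))
    · have : m = p + 1 := le_antisymm h hge
      rw [this]

theorem jpow_mul_jpow_le (hA : IsPseudocompactAlgebra k A) (m n : ℕ) :
    Jpow k A m * Jpow k A n ≤ Jpow k A (m + n) := by
  induction m with
  | zero => rw [Nat.zero_add]; exact top_mul_jpow hA n
  | succ p ih =>
    rw [jpow_succ hA p, mul_assoc]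
    have : Jrad k A * (Jpow k A p * Jpow k A n) ≤ Jrad k A * Jpow k A (p + n) :=
      mul_le_mul' le_rfl ih
    rw [show p + 1 + n = (p + n) + 1 by omega, jpow_succ hA (p+n)]
    exact this

theorem sup_mul_le {P Q R : Submodule k A} : (P ⊔ Q) * R ≤ P * R ⊔ Q * R := by
  refine Submodule.mul_le.2 fun z hz r hr => ?_
  rw [Submodule.mem_sup] at hz
  obtain ⟨p, hp, q, hq, rfl⟩ := hz
  rw [add_mul]
  exact Submodule.add_mem _ (Submodule.mem_sup_left (Submodule.mul_mem_mul hp hr))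
    (Submodule.mem_sup_right (Submodule.mul_mem_mul hq hr))
end
set_option linter.unusedSectionVars false
set_option synthInstance.maxHeartbeats 1000000
set_option maxHeartbeats 1000000
section
variable {k : Type} [Field k] {A : Type} [Ring A] [Algebra k A]
  [UniformSpace A] [IsUniformAddGroup A] [IsTopologicalRing A]

/-- a `k`-submodule stable under left multiplication, as a left ideal -/
def toIdeal (P : Submodule k A) (h : ∀ a : A, ∀ x ∈ P, a * x ∈ P) : Ideal A where
  carrier := P
  add_mem' := fun ha hb => P.add_mem ha hb
  zero_mem' := P.zero_mem
  smul_mem' := fun a x hx => h a x hx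

theorem mem_toIdeal {P : Submodule k A} {h} {x : A} : x ∈ toIdeal P h ↔ x ∈ P := Iff.rfl

theorem nakayama (hA : IsPseudocompactAlgebra k A) {I : Ideal A} (hI : IsBasicIdeal k I)
    {T : Submodule k A} (hTst : ∀ a : A, ∀ x ∈ T, a * x ∈ T)
    (hIT : I.restrictScalars k ≤ T)
    (hT : T ≤ Jrad k A * T ⊔ I.restrictScalars k) : T = I.restrictScalars k := by
  by_contra hne
  set I' := I.restrictScalars k with hI'
  haveI : FiniteDimensional k (A ⧸ I') := hI.2.2
  set π := I'.mkQ with hπ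
  have hlt : I' < T := lt_of_le_of_ne hIT (Ne.symm hne)
  set Pfam := {P : Submodule k A | (∀ a : A, ∀ x ∈ P, a * x ∈ P) ∧ I' ≤ P ∧ P < T} with hPfam
  have hIPfam : I' ∈ Pfam := ⟨fun a x hx => I.smul_mem a hx, le_rfl, hlt⟩
  set ds := (fun P : Submodule k A => Module.finrank k (Submodule.map π P)) '' Pfam with hds
  have hdsne : ds.Nonempty := ⟨_, ⟨I', hIPfam, rfl⟩⟩
  have hbdd : BddAbove ds := ⟨Module.finrank k (A ⧸ I'), by
    rintro d ⟨P, hP, rfl⟩; exact Submodule.finrank_le _⟩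
  obtain ⟨P, hPPfam, hPd0⟩ := Nat.sSup_mem hdsne hbdd
  have hPd : Module.finrank k (Submodule.map π P) = sSup ds := hPd0
  -- P is a coatom below T among stable submodules containing I'
  have hco : ∀ N : Submodule k A, (∀ a : A, ∀ x ∈ N, a * x ∈ N) → I' ≤ N → P < N → N ≤ T →
      N = T := by
    intro N hNst hIN hPN hNT
    by_contra hne2
    have hNPfam : N ∈ Pfam := ⟨hNst, hIN, lt_of_le_of_ne hNT hne2⟩
    have hle2 : Module.finrank k (Submodule.map π N) ≤ sSup ds := le_csSup hbdd ⟨N, hNPfam, rfl⟩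
    have hmaplt : Submodule.map π P < Submodule.map π N := by
      refine lt_of_le_of_ne (Submodule.map_mono hPN.le) fun hmeq => ?_
      have := congrArg (Submodule.comap π) hmeq
      rw [Submodule.comap_map_eq, Submodule.comap_map_eq, Submodule.ker_mkQ,
        sup_eq_left.2 hPPfam.2.1, sup_eq_left.2 hIN] at this
      exact hPN.ne this
    have := Submodule.finrank_lt_finrank_of_lt hmaplt
    omega
  -- J * T ≤ P
  have hJT : Jrad k A * T ≤ P := by
    refine Submodule.mul_le.2 fun x hx s hs => ?_
    by_cases hsP : s ∈ P
    · exact hPPfam.1 x s hsP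
    · refine jacobson_smul_mem hA (P := toIdeal P hPPfam.1) (T := toIdeal T hTst) hI
        (fun y hy => hPPfam.2.1 hy) (fun y hy => hPPfam.2.2.le hy) ?_ hs hsP x hx
      intro N hPN hNT
      have hres : N.restrictScalars k = T := by
        refine hco (N.restrictScalars k) (fun a y hy => N.smul_mem a hy)
          (le_trans hPPfam.2.1 (fun y hy => hPN.le hy)) ?_ (fun y hy => hNT hy)
        refine lt_of_le_of_ne (fun y hy => hPN.le hy) fun he => hPN.ne ?_
        refine Submodule.ext fun y => ?_
        constructor
        · intro hy
          have hy2 : y ∈ P := hy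
          rw [he] at hy2
          exact hy2
        · intro hy
          have hy2 : y ∈ N.restrictScalars k := hy
          rw [← he] at hy2
          exact hy2
      refine le_antisymm hNT fun y hy => ?_
      have hyT : y ∈ T := hy
      show y ∈ N.restrictScalars k
      rw [hres]
      exact hyT
  have : T ≤ P := le_trans hT (sup_le hJT hPPfam.2.1)
  exact hPPfam.2.2.not_ge this

theorem exists_jpow_le_s6 (hA : IsPseudocompactAlgebra k A) {I : Ideal A} (hI : IsBasicIdeal k I) :
    ∃ N : ℕ, ∀ n ≥ N, Jpow k A n ≤ I.restrictScalars k := by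
  set I' := I.restrictScalars k with hI'
  haveI : FiniteDimensional k (A ⧸ I') := hI.2.2
  set π := I'.mkQ with hπ
  set S : ℕ → Submodule k A := fun n => Jpow k A n ⊔ I' with hS
  set g : ℕ → ℕ := fun n => Module.finrank k (Submodule.map π (S n)) with hg
  obtain ⟨N, hN⟩ : ∃ N, g N = sInf (Set.range g) := Nat.sInf_mem (Set.range_nonempty g)
  have hle : S (N+1) ≤ S N := sup_le_sup_right (jpow_antitone_succ hA N) _
  have hfr : g N ≤ g (N+1) := by
    have := Nat.sInf_le (Set.mem_range_self (N+1) : g (N+1) ∈ Set.range g)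
    omega
  have heqmap : Submodule.map π (S (N+1)) = Submodule.map π (S N) :=
    Submodule.eq_of_le_of_finrank_le (Submodule.map_mono hle) hfr
  have heq : S (N+1) = S N := by
    have := congrArg (Submodule.comap π) heqmap
    rwa [Submodule.comap_map_eq, Submodule.comap_map_eq, Submodule.ker_mkQ,
      sup_eq_left.2 le_sup_right, sup_eq_left.2 le_sup_right] at this
  have hstab : ∀ a : A, ∀ x ∈ S N, a * x ∈ S N := by
    intro a x hx
    rw [hS] at hx ⊢
    rw [Submodule.mem_sup] at hx ⊢
    obtain ⟨p, hp, q, hq, rfl⟩ := hx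
    exact ⟨a * p, mem_jpow_of_mul_left hA N a hp, a * q, I.smul_mem a hq, by rw [mul_add]⟩
  have hnak : S N = I' := by
    refine nakayama hA hI hstab le_sup_right ?_
    calc S N = S (N+1) := heq.symm
    _ = Jpow k A (N+1) ⊔ I' := rfl
    _ = Jrad k A * Jpow k A N ⊔ I' := by rw [jpow_succ hA N]
    _ ≤ Jrad k A * S N ⊔ I' := sup_le_sup_right (mul_le_mul' le_rfl le_sup_left) _
  exact ⟨N, fun n hn => le_trans (jpow_antitone hA hn) (le_trans le_sup_left hnak.le)⟩
end
set_option linter.unusedSectionVars false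
set_option synthInstance.maxHeartbeats 1000000
set_option maxHeartbeats 1000000
section
variable {k : Type} [Field k] {V : Type} [AddCommGroup V] [Module k V]

/-- the coset `c + W` -/
def coset (c : V) (W : Submodule k V) : Set V := {x | x - c ∈ W}

/-- `s` is a coset of some `k`-submodule -/
def IsCoset (k : Type) [Field k] {V : Type} [AddCommGroup V] [Module k V] (s : Set V) : Prop :=
  ∃ (c : V) (W : Submodule k V), s = coset c W

theorem mem_coset_self (c : V) (W : Submodule k V) : c ∈ coset c W := by
  simp [coset]

theorem coset_rebase {c c' : V} {W : Submodule k V} (h : c' ∈ coset c W) :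
    coset c W = coset c' W := by
  have hcc : c' - c ∈ W := h
  ext x
  simp only [coset, Set.mem_setOf_eq]
  constructor
  · intro hx
    have := W.sub_mem hx hcc
    rwa [sub_sub_sub_cancel_right] at this
  · intro hx
    have := W.add_mem hx hcc
    rwa [sub_add_sub_cancel] at this

theorem coset_inter {s t : Set V} (hs : IsCoset k s) (ht : IsCoset k t)
    (h : (s ∩ t).Nonempty) : IsCoset k (s ∩ t) := by
  obtain ⟨x, hxs, hxt⟩ := h
  obtain ⟨c, W, rfl⟩ := hs
  obtain ⟨c', W', rfl⟩ := ht
  refine ⟨x, W ⊓ W', ?_⟩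
  rw [coset_rebase hxs, coset_rebase hxt]
  ext y
  simp only [coset, Set.mem_inter_iff, Set.mem_setOf_eq, Submodule.mem_inf]

theorem coset_image {Q : Type} [AddCommGroup Q] [Module k Q] (f : V →ₗ[k] Q) (c : V)
    (W : Submodule k V) : f '' coset c W = coset (f c) (W.map f) := by
  ext y
  constructor
  · rintro ⟨x, hx, rfl⟩
    exact ⟨x - c, hx, by rw [map_sub]⟩
  · rintro ⟨w, hw, hwy⟩
    refine ⟨c + w, ?_, ?_⟩
    · show c + w - c ∈ W
      simpa using hw
    · rw [map_add, hwy]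
      abel

theorem fd_cosets {Q : Type} [AddCommGroup Q] [Module k Q] [FiniteDimensional k Q]
    {T : Set (Set Q)} (hne : T.Nonempty) (hcos : ∀ s ∈ T, IsCoset k s)
    (hnonempty : ∀ s ∈ T, s.Nonempty)
    (hdir : ∀ s ∈ T, ∀ t ∈ T, ∃ u ∈ T, u ⊆ s ∩ t) :
    ∃ q, ∀ s ∈ T, q ∈ s := by
  set ds := {d : ℕ | ∃ s ∈ T, ∃ (c : Q) (W : Submodule k Q),
    s = coset c W ∧ Module.finrank k W = d} with hds
  have hdsne : ds.Nonempty := by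
    obtain ⟨s, hs⟩ := hne
    obtain ⟨c, W, hcw⟩ := hcos s hs
    exact ⟨_, s, hs, c, W, hcw, rfl⟩
  obtain ⟨s₀, hs₀T, c₀, W₀, hs₀, hr₀⟩ := Nat.sInf_mem hdsne
  have hmin : ∀ d ∈ ds, Module.finrank k W₀ ≤ d := by
    intro d hd
    rw [hr₀]
    exact Nat.sInf_le hd
  have hsub : ∀ t ∈ T, s₀ ⊆ t := by
    intro t ht
    obtain ⟨u, huT, husub⟩ := hdir s₀ hs₀T t ht
    obtain ⟨cu, Wu, hueq⟩ := hcos u huT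
    obtain ⟨x, hxu⟩ := hnonempty u huT
    have hxs₀ : x ∈ coset c₀ W₀ := by
      rw [← hs₀]; exact (husub hxu).1
    have hueq' : u = coset x Wu := by
      rw [hueq]
      exact coset_rebase (by rw [← hueq]; exact hxu)
    have hs₀' : s₀ = coset x W₀ := by
      rw [hs₀]
      exact coset_rebase hxs₀
    have hWle : Wu ≤ W₀ := by
      intro w hw
      have hxw : x + w ∈ coset x Wu := by simp [coset, hw]
      have : x + w ∈ coset x W₀ := by
        rw [← hs₀']
        exact (husub (by rw [hueq']; exact hxw)).1
      simpa [coset] using this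
    have hWeq : Wu = W₀ := by
      refine Submodule.eq_of_le_of_finrank_le hWle ?_
      exact hmin _ ⟨u, huT, x, Wu, hueq', rfl⟩
    have : s₀ = u := by rw [hs₀', hueq', hWeq]
    rw [this]
    exact fun y hy => (husub hy).2
  exact ⟨c₀, fun s hs => hsub s hs (hs₀ ▸ mem_coset_self c₀ W₀)⟩
end
section
open Filter Topology
variable {k : Type} [Field k]

theorem linearly_compact {V : Type} [AddCommGroup V] [Module k V] [UniformSpace V]
    [IsUniformAddGroup V] [CompleteSpace V]
    (hbasis : ∀ s ∈ 𝓝 (0 : V), ∃ U : Submodule k V,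
      IsOpen (U : Set V) ∧ FiniteDimensional k (V ⧸ U) ∧ (U : Set V) ⊆ s)
    (S : Set (Set V)) (hSclosed : ∀ s ∈ S, IsClosed s) (hScoset : ∀ s ∈ S, IsCoset k s)
    (hFIP : ∀ t : Finset (Set V), ↑t ⊆ S → (⋂₀ (↑t : Set (Set V))).Nonempty) :
    ∃ a, ∀ s ∈ S, a ∈ s := by
  classical
  rcases S.eq_empty_or_nonempty with rfl | hSne
  · exact ⟨0, by simp⟩
  -- the collection of FIP coset families extending S
  set Afam : Set (Set (Set V)) := {M | S ⊆ M ∧ (∀ s ∈ M, IsCoset k s) ∧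
    ∀ t : Finset (Set V), ↑t ⊆ M → (⋂₀ (↑t : Set (Set V))).Nonempty} with hAfam
  have hSA : S ∈ Afam := ⟨le_refl S, hScoset, hFIP⟩
  have hchains : ∀ c ⊆ Afam, IsChain (· ⊆ ·) c → c.Nonempty →
      ∃ ub ∈ Afam, ∀ s ∈ c, s ⊆ ub := by
    intro c hcA hchain hcne
    refine ⟨⋃₀ c, ⟨?_, ?_, ?_⟩, fun s hs => Set.subset_sUnion_of_mem hs⟩
    · obtain ⟨m, hm⟩ := hcne
      exact le_trans (hcA hm).1 (Set.subset_sUnion_of_mem hm)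
    · rintro s ⟨m, hm, hsm⟩
      exact (hcA hm).2.1 s hsm
    · intro t ht
      rcases t.eq_empty_or_nonempty with rfl | htne
      · simpa using ⟨(0 : V), trivial⟩
      · obtain ⟨m, hmc, hm⟩ :=
          DirectedOn.exists_mem_subset_of_finset_subset_biUnion
            (f := fun m : Set (Set V) => m) hcne
            (by
              intro x hx y hy
              rcases hchain.total hx hy with h | h
              · exact ⟨y, hy, h, le_refl y⟩
              · exact ⟨x, hx, le_refl x, h⟩)
            (by rw [← Set.sUnion_eq_biUnion]; exact ht)
        exact (hcA hmc).2.2 t hm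
  obtain ⟨M, hSM, hMmax⟩ := zorn_subset_nonempty Afam hchains S hSA
  have hMA := hMmax.prop
  -- insertion lemma
  have hinsert : ∀ F : Set V, IsCoset k F →
      (∀ t : Finset (Set V), ↑t ⊆ M → (F ∩ ⋂₀ (↑t : Set (Set V))).Nonempty) → F ∈ M := by
    intro F hFcos hFfip
    have hins : insert F M ∈ Afam := by
      refine ⟨le_trans hMA.1 (Set.subset_insert F M), ?_, ?_⟩
      · rintro s (rfl | hsM)
        · exact hFcos
        · exact hMA.2.1 s hsM
      · intro t ht
        by_cases hFt : F ∈ t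
        · have ht' : ↑(t.erase F) ⊆ M := by
            intro u hu
            have huE : u ∈ t.erase F := Finset.mem_coe.1 hu
            have huM : u ∈ insert F M := ht (Finset.mem_coe.2 (Finset.erase_subset F t huE))
            rcases Set.mem_insert_iff.1 huM with h | h
            · exact absurd (h ▸ huE) (by simp)
            · exact h
          obtain ⟨x, hxF, hxrest⟩ := hFfip (t.erase F) ht'
          refine ⟨x, fun u hu => ?_⟩
          rcases eq_or_ne u F with rfl | hne
          · exact hxF
          · exact hxrest u (Finset.mem_coe.2 (Finset.mem_erase.2 ⟨hne, Finset.mem_coe.1 hu⟩))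
        · have ht' : ↑t ⊆ M := by
            intro u hu
            rcases Set.mem_insert_iff.1 (ht hu) with h | h
            · exact absurd (h ▸ Finset.mem_coe.1 hu) hFt
            · exact h
          exact hMA.2.2 t ht'
    exact (hMmax.2 hins (Set.subset_insert F M)) (Set.mem_insert F M)
  -- members of M are nonempty
  have hMnonempty : ∀ s ∈ M, s.Nonempty := by
    intro s hs
    have := hMA.2.2 {s} (by simpa using hs)
    simpa using this
  -- binary intersections
  have hMinter : ∀ s ∈ M, ∀ t ∈ M, s ∩ t ∈ M := by
    intro s hs t ht
    have hnon : (s ∩ t).Nonempty := by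
      have := hMA.2.2 {s, t} (by
        intro u hu
        rcases Finset.mem_insert.1 (Finset.mem_coe.1 hu) with h | h
        · exact h ▸ hs
        · exact (Finset.mem_singleton.1 h) ▸ ht)
      simpa using this
    refine hinsert (s ∩ t) (coset_inter (hMA.2.1 s hs) (hMA.2.1 t ht) hnon) ?_
    intro u hu
    have := hMA.2.2 (insert s (insert t u)) (by
      intro w hw
      rcases Finset.mem_insert.1 (Finset.mem_coe.1 hw) with h | h
      · exact h ▸ hs
      · rcases Finset.mem_insert.1 h with h' | h'
        · exact h' ▸ ht
        · exact hu (Finset.mem_coe.2 h'))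
    obtain ⟨x, hx⟩ := this
    refine ⟨x, ⟨?_, ?_⟩, ?_⟩
    · exact hx s (by simp)
    · exact hx t (by simp)
    · intro w hw
      exact hx w (Finset.mem_coe.2 (by
        refine Finset.mem_insert.2 (Or.inr (Finset.mem_insert.2 (Or.inr ?_)))
        exact Finset.mem_coe.1 hw))
  -- finite intersections of members are members
  have hMsInter : ∀ t : Finset (Set V), ↑t ⊆ M → t.Nonempty → ⋂₀ (↑t : Set (Set V)) ∈ M := by
    intro t
    induction t using Finset.induction_on with
    | empty => intro _ h; exact absurd h (by simp)
    | insert s t' hnotmem ih =>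
      intro hsub _
      rcases t'.eq_empty_or_nonempty with rfl | ht'ne
      · simpa using hsub (by simp)
      · have h1 : s ∈ M := hsub (by simp)
        have h2 : ⋂₀ (↑t' : Set (Set V)) ∈ M := ih (fun u hu => hsub (by
          simp only [Finset.coe_insert, Set.mem_insert_iff]; right; exact_mod_cast hu)) ht'ne
        have := hMinter s h1 _ h2
        have heq : (↑(insert s t') : Set (Set V)) = insert s ↑t' := by simp
        rw [heq, Set.sInter_insert]
        exact this
  -- for each open finite-codimensional U there is a coset of U in M
  have hcosetU : ∀ U : Submodule k V, IsOpen (U : Set V) → FiniteDimensional k (V ⧸ U) →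
      ∃ c : V, coset c U ∈ M := by
    intro U hUopen hUfd
    set π := U.mkQ with hπ
    set T : Set (Set (V ⧸ U)) := (fun s => π '' s) '' M with hT
    have hTne : T.Nonempty := ⟨π '' (Classical.choose hSne), Set.mem_image_of_mem _
      (hMA.1 (Classical.choose_spec hSne))⟩
    have hq : ∃ q, ∀ s ∈ T, q ∈ s := by
      refine fd_cosets (k := k) hTne ?_ ?_ ?_
      · rintro s ⟨m, hm, rfl⟩
        obtain ⟨c, W, rfl⟩ := hMA.2.1 m hm
        exact ⟨π c, W.map π, coset_image π c W⟩
      · rintro s ⟨m, hm, rfl⟩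
        exact (hMnonempty m hm).image π
      · rintro s ⟨m, hm, rfl⟩ t ⟨m', hm', rfl⟩
        refine ⟨π '' (m ∩ m'), Set.mem_image_of_mem _ (hMinter m hm m' hm'), ?_⟩
        intro y hy
        obtain ⟨x, hx, rfl⟩ := hy
        exact ⟨⟨x, hx.1, rfl⟩, ⟨x, hx.2, rfl⟩⟩
    obtain ⟨q, hq⟩ := hq
    obtain ⟨c, rfl⟩ := Submodule.mkQ_surjective U q
    refine ⟨c, hinsert (coset c U) ⟨c, U, rfl⟩ ?_⟩
    intro t ht
    rcases t.eq_empty_or_nonempty with rfl | htne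
    · exact ⟨c, mem_coset_self c U, by simp⟩
    · have hsInter : ⋂₀ (↑t : Set (Set V)) ∈ M := hMsInter t ht htne
      have : π c ∈ π '' (⋂₀ (↑t : Set (Set V))) := hq _ (Set.mem_image_of_mem _ hsInter)
      obtain ⟨y, hy, hyc⟩ := this
      refine ⟨y, ?_, hy⟩
      show y - c ∈ U
      rw [hπ, Submodule.mkQ_apply, Submodule.mkQ_apply] at hyc
      exact (Submodule.Quotient.eq U).1 hyc
  -- build a Cauchy filter
  set F : Filter V := Filter.generate M with hF
  have hmemF : ∀ s ∈ M, s ∈ F := by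
    intro s hs
    exact Filter.mem_generate_iff.2 ⟨{s}, by simpa using hs, Set.finite_singleton s, by simp⟩
  have hFne : F.NeBot := by
    rw [← Filter.forall_mem_nonempty_iff_neBot]
    intro s hs
    obtain ⟨t, htM, htfin, htsub⟩ := Filter.mem_generate_iff.1 hs
    have := hMA.2.2 htfin.toFinset (by rwa [Set.Finite.coe_toFinset])
    rw [Set.Finite.coe_toFinset] at this
    exact this.mono htsub
  have hFcauchy : Cauchy F := by
    refine ⟨hFne, ?_⟩
    rw [uniformity_eq_comap_nhds_zero V, ← Filter.map_le_iff_le_comap]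
    intro s hs
    obtain ⟨U, hUopen, hUfd, hUsub⟩ := hbasis s hs
    obtain ⟨c, hcU⟩ := hcosetU U hUopen hUfd
    rw [Filter.mem_map]
    refine Filter.mem_of_superset
      (Filter.prod_mem_prod (hmemF _ hcU) (hmemF _ hcU)) ?_
    rintro ⟨x, y⟩ ⟨hx, hy⟩
    have hx' : x - c ∈ U := hx
    have hy' : y - c ∈ U := hy
    have : y - x ∈ U := by
      have := U.sub_mem hy' hx'
      rwa [sub_sub_sub_cancel_right] at this
    exact hUsub this
  obtain ⟨a, ha⟩ := CompleteSpace.complete hFcauchy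
  refine ⟨a, fun s hs => ?_⟩
  have hsM : s ∈ M := hMA.1 hs
  have hclosure : a ∈ closure s := by
    rw [mem_closure_iff_nhds]
    intro n hn
    have hnF : n ∈ F := ha hn
    have := hFne.nonempty_of_mem (Filter.inter_mem hnF (hmemF s hsM))
    exact this
  exact (hSclosed s hs).closure_subset hclosure
end
section
open Filter Topology
set_option linter.unusedSectionVars false
set_option synthInstance.maxHeartbeats 1000000
set_option maxHeartbeats 2000000
variable {k : Type} [Field k] {A : Type} [Ring A] [Algebra k A]
  [UniformSpace A] [IsUniformAddGroup A] [IsTopologicalRing A]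

theorem submodule_coe_eq_coset {V : Type} [AddCommGroup V] [Module k V] (W : Submodule k V) :
    (W : Set V) = coset 0 W := by
  ext x; simp [coset]

theorem pi_basis (hA : IsPseudocompactAlgebra k A) (ι : Type) [Fintype ι] :
    ∀ s ∈ 𝓝 (0 : ι → A), ∃ U : Submodule k (ι → A), IsOpen (U : Set (ι → A)) ∧
      FiniteDimensional k ((ι → A) ⧸ U) ∧ (U : Set (ι → A)) ⊆ s := by
  intro s hs
  rw [nhds_pi, Filter.mem_pi] at hs
  obtain ⟨Is, hIsfin, t, ht, hsub⟩ := hs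
  choose I hbI hIsub using fun i => basic_exists hA (ht i)
  set U : Submodule k (ι → A) := Submodule.pi Set.univ (fun i => (I i).restrictScalars k) with hU
  have hUcoe : (U : Set (ι → A)) = Set.pi Set.univ (fun i => ((I i) : Set A)) := by
    ext x; simp [hU, Submodule.mem_pi]
  refine ⟨U, ?_, ?_, ?_⟩
  · rw [hUcoe]
    exact isOpen_set_pi Set.finite_univ (fun i _ => (hbI i).2.1)
  · set ψ : (ι → A) →ₗ[k] (∀ i : ι, A ⧸ (I i).restrictScalars k) :=
      LinearMap.pi (fun i => ((I i).restrictScalars k).mkQ.comp (LinearMap.proj i)) with hψ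
    have hker : LinearMap.ker ψ = U := by
      ext x
      rw [LinearMap.mem_ker, hU, Submodule.mem_pi]
      constructor
      · intro h i _
        have := congrFun h i
        simpa [hψ, Submodule.Quotient.mk_eq_zero] using this
      · intro h
        funext i
        simpa [hψ, Submodule.Quotient.mk_eq_zero] using h i trivial
    haveI : ∀ i, FiniteDimensional k (A ⧸ (I i).restrictScalars k) := fun i => (hbI i).2.2
    haveI : FiniteDimensional k (∀ i : ι, A ⧸ (I i).restrictScalars k) := by infer_instance
    have e := ψ.quotKerEquivRange
    rw [hker] at e
    exact Module.Finite.equiv e.symm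
  · intro x hx
    refine hsub ?_
    intro i _
    have : x i ∈ I i := by
      rw [hUcoe] at hx
      exact hx i trivial
    exact hIsub i this

theorem jrad_isClosed : IsClosed (Jrad k A : Set A) := by
  have : (Jrad k A : Set A) = ⋂ M ∈ {I : Ideal A | IsOpen (I : Set A) ∧ I.IsMaximal}, (M : Set A) := by
    show ((openJacobson A : Ideal A) : Set A) = _
    rw [openJacobson, Submodule.coe_sInf]
  rw [this]
  exact isClosed_biInter fun M hM => ideal_isClosed_of_isOpen hM.1

theorem exists_generators (hA : IsPseudocompactAlgebra k A)
    (hfd : FiniteDimensional k (A ⧸ Jpow k A 2)) :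
    ∃ G : Finset A, (∀ x ∈ G, x ∈ Jrad k A) ∧
      Jrad k A ≤ Submodule.span k (G : Set A) ⊔ Jpow k A 2 := by
  classical
  set π2 := (Jpow k A 2).mkQ with hπ2
  have hfg : (Submodule.map π2 (Jrad k A)).FG := IsNoetherian.noetherian _
  obtain ⟨s, hs⟩ := hfg
  have hlift : ∀ q ∈ (s : Set (A ⧸ Jpow k A 2)), ∃ x, x ∈ Jrad k A ∧ π2 x = q := by
    intro q hq
    have : q ∈ Submodule.map π2 (Jrad k A) := by
      rw [← hs]
      exact Submodule.subset_span hq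
    obtain ⟨x, hx, hxq⟩ := this
    exact ⟨x, hx, hxq⟩
  choose g hg1 hg2 using hlift
  set G : Finset A := s.attach.image (fun q => g q.1 (by exact_mod_cast q.2)) with hG
  refine ⟨G, ?_, ?_⟩
  · intro x hx
    rw [hG] at hx
    obtain ⟨q, _, rfl⟩ := Finset.mem_image.1 hx
    exact hg1 _ _
  · intro j hj
    have hmem : π2 j ∈ Submodule.map π2 (Submodule.span k (G : Set A)) := by
      rw [← Submodule.span_image]
      have hsub : (s : Set (A ⧸ Jpow k A 2)) ⊆ π2 '' (G : Set A) := by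
        intro q hq
        refine ⟨g q (by exact_mod_cast hq), ?_, hg2 _ _⟩
        rw [hG]
        push_cast
        exact ⟨⟨q, by exact_mod_cast hq⟩, Set.mem_univ _, rfl⟩
      have : π2 j ∈ Submodule.span k (s : Set (A ⧸ Jpow k A 2)) := by
        rw [hs]
        exact Submodule.mem_map_of_mem hj
      exact Submodule.span_mono hsub this
    obtain ⟨y, hy, hyj⟩ := hmem
    have : j - y ∈ Jpow k A 2 := by
      rw [← Submodule.ker_mkQ (Jpow k A 2), LinearMap.mem_ker, map_sub]
      rw [← hπ2] at *
      rw [hyj]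
      simp
    rw [Submodule.mem_sup]
    exact ⟨y, hy, j - y, this, by abel⟩
end
section
open Filter Topology
set_option linter.unusedSectionVars false
set_option synthInstance.maxHeartbeats 1000000
set_option maxHeartbeats 2000000
variable {k : Type} [Field k] {A : Type} [Ring A] [Algebra k A]
  [UniformSpace A] [IsUniformAddGroup A] [IsTopologicalRing A]

theorem jpow_isClosed (hA : IsPseudocompactAlgebra k A)
    (hfd : FiniteDimensional k (A ⧸ Jpow k A 2)) : ∀ n, IsClosed (Jpow k A n : Set A) := by
  classical
  obtain ⟨G, hG, hspan⟩ := exists_generators hA hfd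
  haveI := hA.complete
  intro n
  induction n with
  | zero =>
    show IsClosed ((⊤ : Submodule k A) : Set A)
    rw [Submodule.top_coe]
    exact isClosed_univ
  | succ n ih =>
    set Φ : ({x // x ∈ G} → A) →ₗ[k] A :=
      ∑ x : {x // x ∈ G}, (LinearMap.mulLeft k (x.1)).comp (LinearMap.proj x) with hΦ
    have hΦapp : ∀ c : {x // x ∈ G} → A, Φ c = ∑ x : {x // x ∈ G}, x.1 * c x := by
      intro c
      rw [hΦ]
      simp [LinearMap.sum_apply, LinearMap.mulLeft_apply]
    set PiS : Submodule k ({x // x ∈ G} → A) :=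
      Submodule.pi Set.univ (fun _ => Jpow k A n) with hPiS
    set D : Submodule k A := Submodule.map Φ PiS with hD
    have hΦcont : Continuous Φ := by
      have heq : ⇑Φ = fun c : {x // x ∈ G} → A => ∑ x : {x // x ∈ G}, x.1 * c x :=
        funext hΦapp
      rw [heq]
      exact continuous_finset_sum _ (fun x _ => continuous_const.mul (continuous_apply _))
    have hDle : D ≤ Jpow k A (n+1) := by
      rintro _ ⟨c, hc, rfl⟩
      rw [hΦapp]
      refine Submodule.sum_mem _ fun x _ => ?_
      rw [jpow_succ hA n]
      exact Submodule.mul_mem_mul (hG x.1 x.2) (hc x trivial)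
    have hspanD : Submodule.span k (G : Set A) * Jpow k A n ≤ D := by
      refine Submodule.mul_le.2 fun z hz w hw => ?_
      induction hz using Submodule.span_induction with
      | mem x hx =>
        refine ⟨Pi.single ⟨x, hx⟩ w, ?_, ?_⟩
        · intro j _
          rcases eq_or_ne j ⟨x, hx⟩ with rfl | hne
          · rw [Pi.single_eq_same]; exact hw
          · rw [Pi.single_eq_of_ne hne]; exact Submodule.zero_mem _
        · rw [hΦapp]
          rw [Fintype.sum_eq_single (⟨x, hx⟩ : {x // x ∈ G})
            (fun b hb => by rw [Pi.single_eq_of_ne hb, mul_zero])]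
          rw [Pi.single_eq_same]
      | zero => rw [zero_mul]; exact D.zero_mem
      | add a b _ _ ha hb => rw [add_mul]; exact D.add_mem ha hb
      | smul r a _ ha => rw [smul_mul_assoc]; exact D.smul_mem r ha
    have hstep : ∀ m, Jpow k A (n+1) ≤ D ⊔ Jpow k A (n+1+m) := by
      intro m
      induction m with
      | zero => exact le_sup_right
      | succ p ihp =>
        have hinner : Jpow k A (n+1+p) ≤ D ⊔ Jpow k A (n+1+p+1) := by
          have e1 : n+1+p = (n+p)+1 := by omega
          rw [e1, jpow_succ hA (n+p)]
          have h1 : Jrad k A * Jpow k A (n+p) ≤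
              (Submodule.span k (G : Set A) ⊔ Jpow k A 2) * Jpow k A (n+p) :=
            mul_le_mul' hspan le_rfl
          refine le_trans h1 (le_trans sup_mul_le ?_)
          refine sup_le ?_ ?_
          · exact le_trans
              (mul_le_mul' le_rfl (jpow_antitone hA (Nat.le_add_right n p)))
              (hspanD.trans le_sup_left)
          · refine le_trans (jpow_mul_jpow_le hA 2 (n+p)) ?_
            have e2 : 2 + (n+p) = (n+p)+1+1 := by omega
            rw [e2]
            exact le_sup_right
        exact ihp.trans (sup_le le_sup_left hinner)
    have hDclosed : IsClosed (D : Set A) := by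
      refine isClosed_of_closure_subset ?_
      intro z hz
      have hmeet : ∀ I : Ideal A, IsBasicIdeal k I →
          ∃ c₀, c₀ ∈ PiS ∧ Φ c₀ - z ∈ I := by
        intro I hI
        have hopen : IsOpen {y : A | y - z ∈ I} :=
          (continuous_id.sub continuous_const).isOpen_preimage _ hI.2.1
        have hnhd : {y : A | y - z ∈ I} ∈ 𝓝 z := hopen.mem_nhds (by simp)
        obtain ⟨d, hdI, hdD⟩ := mem_closure_iff_nhds.1 hz _ hnhd
        obtain ⟨c₀, hc₀, rfl⟩ := hdD
        exact ⟨c₀, hc₀, hdI⟩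
      set SS : Set (Set ({x // x ∈ G} → A)) := insert (PiS : Set ({x // x ∈ G} → A))
        ((fun I : Ideal A => ⇑Φ ⁻¹' {y | y - z ∈ I}) '' {I | IsBasicIdeal k I}) with hSS
      have hSSclosed : ∀ s ∈ SS, IsClosed s := ?hclosed
      have hSScoset : ∀ s ∈ SS, IsCoset k s := ?hcoset
      have hSSfip : ∀ t : Finset (Set ({x // x ∈ G} → A)), ↑t ⊆ SS →
          (⋂₀ (↑t : Set (Set ({x // x ∈ G} → A)))).Nonempty := ?hfip
      obtain ⟨c, hc⟩ := linearly_compact (k := k) (pi_basis hA _) SS hSSclosed hSScoset hSSfip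
      case _ =>
        have hcPi : c ∈ PiS := hc _ (Set.mem_insert _ _)
        have hall : ∀ s ∈ 𝓝 (0:A), Φ c - z ∈ s := by
          intro s hs
          obtain ⟨I, hI, hIs⟩ := basic_exists hA hs
          exact hIs (hc _ (Set.mem_insert_of_mem _ (Set.mem_image_of_mem _ hI)))
        have h0 : Φ c - z = 0 := eq_zero_of_forall_nhds hA hall
        have hzc : z = Φ c := by
          rw [sub_eq_zero] at h0
          exact h0.symm
        rw [hzc]
        exact Submodule.mem_map_of_mem hcPi
      case hclosed =>
        intro s hs
        rcases Set.mem_insert_iff.1 hs with rfl | ⟨I, hI, rfl⟩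
        · rw [Submodule.coe_pi]
          exact isClosed_set_pi (fun i _ => ih)
        · refine IsClosed.preimage hΦcont ?_
          exact IsClosed.preimage (continuous_id.sub continuous_const)
            (ideal_isClosed_of_isOpen hI.2.1)
      case hcoset =>
        intro s hs
        rcases Set.mem_insert_iff.1 hs with rfl | ⟨I, hI, rfl⟩
        · exact ⟨0, PiS, submodule_coe_eq_coset PiS⟩
        · obtain ⟨c₀, hc₀Pi, hc₀I⟩ := hmeet I hI
          refine ⟨c₀, Submodule.comap Φ (I.restrictScalars k), ?_⟩
          ext x
          show (Φ x - z ∈ I) ↔ x - c₀ ∈ Submodule.comap Φ (I.restrictScalars k)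
          rw [Submodule.mem_comap]
          constructor
          · intro hx
            show Φ (x - c₀) ∈ I
            rw [map_sub]
            have := I.sub_mem hx hc₀I
            rwa [sub_sub_sub_cancel_right] at this
          · intro hx
            have h2 : Φ x - Φ c₀ ∈ I := by
              rw [← map_sub]
              exact hx
            have := I.add_mem h2 hc₀I
            rwa [sub_add_sub_cancel] at this
      case hfip =>
        intro t ht
        set tI : Set ({x // x ∈ G} → A) → Ideal A := fun u =>
          if h : ∃ I : Ideal A, IsBasicIdeal k I ∧ u = ⇑Φ ⁻¹' {y | y - z ∈ I} then h.choose
          else ⊤ with htIdef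
        have htI : ∀ u ∈ t, u ≠ (PiS : Set ({x // x ∈ G} → A)) →
            IsBasicIdeal k (tI u) ∧ u = ⇑Φ ⁻¹' {y | y - z ∈ tI u} := by
          intro u hu hne
          rcases Set.mem_insert_iff.1 (ht (Finset.mem_coe.2 hu)) with h | ⟨I, hI, hIe⟩
          · exact absurd h hne
          · have hex : ∃ I' : Ideal A, IsBasicIdeal k I' ∧
                u = ⇑Φ ⁻¹' {y | y - z ∈ I'} := ⟨I, hI, hIe.symm⟩
            rw [htIdef]
            simp only [dif_pos hex]
            exact ⟨hex.choose_spec.1, hex.choose_spec.2⟩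
        have hnhd0 : (⋂ u ∈ t.filter (fun u => u ≠ (PiS : Set ({x // x ∈ G} → A))),
            ((tI u : Ideal A) : Set A)) ∈ 𝓝 (0:A) := by
          refine (Filter.biInter_finset_mem _).2 ?_
          intro u hu
          obtain ⟨hu1, hu2⟩ := Finset.mem_filter.1 hu
          exact ((htI u hu1 hu2).1.2.1).mem_nhds (tI u).zero_mem
        obtain ⟨Istar, hIstar, hIstarsub⟩ := basic_exists hA hnhd0
        obtain ⟨c₀, hc₀Pi, hc₀I⟩ := hmeet Istar hIstar
        refine ⟨c₀, fun u hu => ?_⟩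
        rcases eq_or_ne u (PiS : Set ({x // x ∈ G} → A)) with rfl | hne
        · exact hc₀Pi
        · obtain ⟨hb, hequ⟩ := htI u (Finset.mem_coe.1 hu) hne
          rw [hequ]
          show Φ c₀ - z ∈ tI u
          have h3 := hIstarsub hc₀I
          exact Set.mem_iInter₂.1 h3 u (Finset.mem_filter.2 ⟨Finset.mem_coe.1 hu, hne⟩)
    -- Jpow (n+1) ⊆ closure D
    have hsubclosure : (Jpow k A (n+1) : Set A) ⊆ closure (D : Set A) := by
      intro z hz1
      rw [mem_closure_iff_nhds]
      intro s hs
      have hs0 : (fun y => z + y) ⁻¹' s ∈ 𝓝 (0:A) := by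
        have hcont : Continuous (fun y : A => z + y) := continuous_const.add continuous_id
        have htend := hcont.tendsto 0
        rw [add_zero] at htend
        exact htend hs
      obtain ⟨I, hI, hIsub⟩ := basic_exists hA hs0
      obtain ⟨N, hN⟩ := exists_jpow_le_s6 hA hI
      have hz2 : z ∈ D ⊔ Jpow k A (n+1+N) := hstep N hz1
      rw [Submodule.mem_sup] at hz2
      obtain ⟨d, hd, w, hw, rfl⟩ := hz2
      refine ⟨d, ?_, hd⟩
      have hwI : w ∈ I := hN (n+1+N) (by omega) hw
      have hmem : (d + w) + (-w) ∈ s := hIsub (I.neg_mem hwI)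
      simpa using hmem
    have hfinal : (Jpow k A (n+1) : Set A) = (D : Set A) := by
      refine subset_antisymm ?_ hDle
      rw [← hDclosed.closure_eq]
      exact hsubclosure
    rw [hfinal]
    exact hDclosed
end
section
open Filter Topology
set_option linter.unusedSectionVars false
set_option synthInstance.maxHeartbeats 1000000
set_option maxHeartbeats 2000000
variable {k : Type} [Field k] {A : Type} [Ring A] [Algebra k A]
  [UniformSpace A] [IsUniformAddGroup A] [IsTopologicalRing A]

theorem jadic_final (hA : IsPseudocompactAlgebra k A)
    (hfd : FiniteDimensional k (A ⧸ Jpow k A 2)) :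
    Function.Injective
      (fun (a : A) (n : ℕ) => (Submodule.Quotient.mk a : A ⧸ Jpow k A n)) ∧
    ∀ f : (n : ℕ) → A ⧸ Jpow k A n,
      (∀ n : ℕ, ∃ a : A, ∀ m : ℕ, m ≤ n → (Submodule.Quotient.mk a : A ⧸ Jpow k A m) = f m) →
      ∃ a : A, ∀ n : ℕ, (Submodule.Quotient.mk a : A ⧸ Jpow k A n) = f n := by
  haveI := hA.complete
  constructor
  · intro x y hxy
    have h : ∀ n, x - y ∈ Jpow k A n := by
      intro n
      exact (Submodule.Quotient.eq _).1 (congrFun hxy n)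
    have h0 : x - y = 0 := by
      refine eq_zero_of_forall_nhds hA fun s hs => ?_
      obtain ⟨I, hI, hIs⟩ := basic_exists hA hs
      obtain ⟨N, hN⟩ := exists_jpow_le_s6 hA hI
      exact hIs (hN N le_rfl (h N))
    exact sub_eq_zero.1 h0
  · intro f hf
    choose a ha using hf
    set F : Filter A := Filter.atTop.map a with hF
    have hdiff : ∀ N : ℕ, ∀ i ≥ N, ∀ j ≥ N, a j - a i ∈ Jpow k A N := by
      intro N i hi j hj
      have h1 : (Submodule.Quotient.mk (a i) : A ⧸ Jpow k A N) = f N := ha i N hi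
      have h2 : (Submodule.Quotient.mk (a j) : A ⧸ Jpow k A N) = f N := ha j N hj
      exact (Submodule.Quotient.eq _).1 (h2.trans h1.symm)
    have hFcauchy : Cauchy F := by
      refine ⟨Filter.map_neBot, ?_⟩
      rw [uniformity_eq_comap_nhds_zero A, ← Filter.map_le_iff_le_comap]
      intro s hs
      obtain ⟨I, hI, hIs⟩ := basic_exists hA hs
      obtain ⟨N, hN⟩ := exists_jpow_le_s6 hA hI
      rw [Filter.mem_map]
      refine Filter.mem_of_superset
        (Filter.prod_mem_prod (Filter.image_mem_map (Filter.Ici_mem_atTop N))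
          (Filter.image_mem_map (Filter.Ici_mem_atTop N))) ?_
      rintro ⟨x, y⟩ ⟨⟨i, hi, rfl⟩, ⟨j, hj, rfl⟩⟩
      exact hIs (hN N le_rfl (hdiff N i hi j hj))
    obtain ⟨b, hb⟩ := CompleteSpace.complete hFcauchy
    refine ⟨b, fun m => ?_⟩
    have hclosed : IsClosed {y : A | y - a m ∈ Jpow k A m} :=
      IsClosed.preimage (continuous_id.sub continuous_const) (jpow_isClosed hA hfd m)
    have himg : a '' Set.Ici m ⊆ {y : A | y - a m ∈ Jpow k A m} := by
      rintro _ ⟨j, hj, rfl⟩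
      exact hdiff m m le_rfl j hj
    have hbmem : b ∈ {y : A | y - a m ∈ Jpow k A m} := by
      have hbc : b ∈ closure (a '' Set.Ici m) := by
        rw [mem_closure_iff_nhds]
        intro t ht
        have h1 : t ∈ F := hb ht
        have h2 : a '' Set.Ici m ∈ F := Filter.image_mem_map (Filter.Ici_mem_atTop m)
        exact hFcauchy.1.nonempty_of_mem (Filter.inter_mem h1 h2)
      exact hclosed.closure_subset ((closure_mono himg).trans le_rfl hbc)
    have : (Submodule.Quotient.mk b : A ⧸ Jpow k A m) = Submodule.Quotient.mk (a m) :=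
      (Submodule.Quotient.eq _).2 hbmem
    rw [this]
    exact ha m m le_rfl
end

/-- Let `A` be a pseudocompact `k`-algebra with `A/J²(A)` finite
dimensional.  Then `A` is complete with respect to the `J`-adic topology: the canonical
map `A → lim_n A/Jⁿ(A)` is an isomorphism.  This is encoded as:  the canonical map
`a ↦ (a + Jⁿ(A))ₙ` is injective, and every compatible family of cosets (i.e. every element
of the inverse limit `lim_n A/Jⁿ(A)`) is in its image. -/
theorem jadic_complete
    (k : Type) [Field k] [PerfectField k]
    (A : Type) [Ring A] [Algebra k A] [UniformSpace A] [IsUniformAddGroup A] [IsTopologicalRing A]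
    (hA : IsPseudocompactAlgebra k A)
    (hfd : FiniteDimensional k (A ⧸ Jpow k A 2)) :
    Function.Injective
      (fun (a : A) (n : ℕ) => (Submodule.Quotient.mk a : A ⧸ Jpow k A n)) ∧
    ∀ f : (n : ℕ) → A ⧸ Jpow k A n,
      (∀ n : ℕ, ∃ a : A, ∀ m : ℕ, m ≤ n → (Submodule.Quotient.mk a : A ⧸ Jpow k A m) = f m) →
      ∃ a : A, ∀ n : ℕ, (Submodule.Quotient.mk a : A ⧸ Jpow k A n) = f n := by
  exact jadic_final hA hfd
end
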